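/- arXiv:2208.14412 — 2 statements merged into one kernel-verified Lean document; each statement's English description precedes it below -/
import Mathlib

section
/- Every non-copying first-order transduction T is subsumed by a non-copying transduction T' whose associated interpretation is of the form (M(x), η'(x,y)), where M is a unary relation symbol and η' is a local formula. -/
open SimpleGraph

/-! ### Finite graphs and colored graphs -/

/-- A finite simple graph. -/
structure FGraph : Type 1 where
  V : Type
  [fin : Finite V]
  G : SimpleGraph V

attribute [instance] FGraph.fin

/-- A finite simple graph colored by `c` unary predicates. -/
structure CGraph (c : ℕ) : Type 1 where
  V : Type
  [fin : Finite V]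
  G : SimpleGraph V
  color : Fin c → Set V

attribute [instance] CGraph.fin

/-! ### First-order formulas over `c`-colored graphs -/

/-- First-order formulas in the language of graphs with `c` unary predicates,
with free variables among `Fin m`. -/
inductive Fml (c : ℕ) : ℕ → Type where
  | eq {m} : Fin m → Fin m → Fml c m
  | adj {m} : Fin m → Fin m → Fml c m
  | col {m} : Fin c → Fin m → Fml c m
  | not {m} : Fml c m → Fml c m
  | or {m} : Fml c m → Fml c m → Fml c m
  | ex {m} : Fml c (m + 1) → Fml c m

/-- Satisfaction of a first-order formula in a colored graph. -/
def Fml.Sat {c : ℕ} (A : CGraph c) : {m : ℕ} → Fml c m → (Fin m → A.V) → Prop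
  | _, .eq i j, v => v i = v j
  | _, .adj i j, v => A.G.Adj (v i) (v j)
  | _, .col i x, v => v x ∈ A.color i
  | _, .not φ, v => ¬ Fml.Sat A φ v
  | _, .or φ ψ, v => Fml.Sat A φ v ∨ Fml.Sat A ψ v
  | _, .ex φ, v => ∃ w : A.V, Fml.Sat A φ (Fin.snoc v w)

/-! ### Simple interpretations and transductions -/

/-- A simple interpretation of graphs in `c`-colored graphs: a pair of formulas
`(ν(x), η(x,y))` with `η` symmetric and anti-reflexive. -/
structure Interp (c : ℕ) where
  ν : Fml c 1
  η : Fml c 2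
  symm : ∀ (A : CGraph c) (u v : A.V), Fml.Sat A η ![u, v] → Fml.Sat A η ![v, u]
  irrefl : ∀ (A : CGraph c) (v : A.V), ¬ Fml.Sat A η ![v, v]

/-- The graph interpreted in a colored graph. -/
def Interp.result {c : ℕ} (I : Interp c) (A : CGraph c) :
    SimpleGraph {v : A.V // Fml.Sat A I.ν ![v]} where
  Adj u v := Fml.Sat A I.η ![u.1, v.1]
  symm := ⟨fun u v h => I.symm A u.1 v.1 h⟩
  loopless := ⟨fun v h => I.irrefl A v.1 h⟩

/-- The `k`-copy operation on graphs: the copies of a vertex form a clique, and copies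
with the same index are adjacent iff the original vertices are. -/
def copyGraph {V : Type} (G : SimpleGraph V) (k : ℕ) : SimpleGraph (V × Fin k) where
  Adj a b := (a.1 = b.1 ∧ a.2 ≠ b.2) ∨ (G.Adj a.1 b.1 ∧ a.2 = b.2)
  symm := by
    refine ⟨?_⟩
    rintro a b (⟨h1, h2⟩ | ⟨h1, h2⟩)
    · exact Or.inl ⟨h1.symm, h2.symm⟩
    · exact Or.inr ⟨h1.symm, h2.symm⟩
  loopless := by
    refine ⟨?_⟩
    rintro a (⟨_, h⟩ | ⟨h, _⟩)
    · exact h rfl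
    · exact G.loopless.irrefl _ h

/-- The `k`-copy operation on finite graphs. -/
def FGraph.copy (G : FGraph) (k : ℕ) : FGraph where
  V := G.V × Fin k
  G := copyGraph G.G k

/-- A transduction: a composition `I ∘ Γ_𝒰 ∘ C_k` of a copy operation, a coloring
operation and a simple interpretation. -/
structure Transduction where
  k : ℕ
  kpos : 0 < k
  c : ℕ
  I : Interp c

/-- The colored graph obtained from `C_k(G)` by a choice of coloring. -/
def Transduction.copyCGraph (T : Transduction) (G : FGraph)
    (color : Fin T.c → Set (G.V × Fin T.k)) : CGraph T.c where
  V := G.V × Fin T.k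
  G := copyGraph G.G T.k
  color := color

/-- `H ∈ T(G)` (up to isomorphism). -/
def Transduction.mem (T : Transduction) (G H : FGraph) : Prop :=
  ∃ color : Fin T.c → Set (G.V × Fin T.k),
    Nonempty (H.G ≃g T.I.result (T.copyCGraph G color))

/-- The image `T(𝒟)` of a class of graphs under a transduction. -/
def TImage (T : Transduction) (D : Set FGraph) : Set FGraph :=
  {H | ∃ G ∈ D, T.mem G H}

/-- `𝒞 ⊑_FO 𝒟` : `𝒞` is a first-order transduction of `𝒟`. -/
def SqFO (C D : Set FGraph) : Prop := ∃ T : Transduction, C ⊆ TImage T D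

/-- `𝒞 ⊑°_FO 𝒟` : `𝒞` is a non-copying first-order transduction of `𝒟`. -/
def SqFOnc (C D : Set FGraph) : Prop := ∃ T : Transduction, T.k = 1 ∧ C ⊆ TImage T D

/-- `𝒞 ≡_FO 𝒟`. -/
def EquivFO (C D : Set FGraph) : Prop := SqFO C D ∧ SqFO D C

/-- `T'` subsumes `T` : `T'(G) ⊇ T(G)` for every graph `G`. -/
def Subsumes (T' T : Transduction) : Prop := ∀ G H : FGraph, T.mem G H → T'.mem G H

/-! ### Perturbations -/

/-- The subset complementation `⊕M`: complement the adjacency between distinct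
vertices that both belong to `M`. -/
def scompGraph {V : Type} (G : SimpleGraph V) (M : Set V) : SimpleGraph V where
  Adj u v := u ≠ v ∧ (G.Adj u v ↔ ¬(u ∈ M ∧ v ∈ M))
  symm := by
    refine ⟨?_⟩
    rintro u v ⟨h1, h2⟩
    refine ⟨h1.symm, ?_, ?_⟩
    · intro h hm
      exact (h2.mp (G.adj_symm h)) ⟨hm.2, hm.1⟩
    · intro h
      exact G.adj_symm (h2.mpr fun hm => h ⟨hm.2, hm.1⟩)
  loopless := ⟨fun v h => h.1 rfl⟩

/-- Applying a finite sequence of subset complementations. -/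
def perturbGraph {V : Type} : List (Set V) → SimpleGraph V → SimpleGraph V
  | [], G => G
  | M :: Ms, G => perturbGraph Ms (scompGraph G M)

/-- `H ∈ P(G)` for a perturbation `P` that is the composition of `p` subset
complementations (up to isomorphism). -/
def PerturbMem (p : ℕ) (G H : FGraph) : Prop :=
  ∃ Z : Fin p → Set G.V, Nonempty (H.G ≃g perturbGraph (List.ofFn Z) G.G)

/-- The image `P(𝒟)` of a class under a perturbation with `p` marks. -/
def PerturbImage (p : ℕ) (D : Set FGraph) : Set FGraph :=
  {H | ∃ G ∈ D, PerturbMem p G H}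

/-- `𝒞` is a perturbation of `𝒟`. -/
def IsPerturbationOfClass (C D : Set FGraph) : Prop := ∃ p, C ⊆ PerturbImage p D

/-! ### Locality -/

/-- The ball of radius `r` around a set `S` of vertices. -/
def ballSet {V : Type} (G : SimpleGraph V) (r : ℕ) (S : Set V) : Set V :=
  {v | ∃ u ∈ S, G.Reachable u v ∧ G.dist u v ≤ r}

lemma mem_ballSet_self {V : Type} (G : SimpleGraph V) (r : ℕ) {S : Set V} {v : V}
    (hv : v ∈ S) : v ∈ ballSet G r S :=
  ⟨v, hv, Reachable.refl v, by rw [SimpleGraph.dist_self]; exact Nat.zero_le r⟩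

/-- The colored subgraph induced on a set of vertices. -/
def CGraph.induce {c : ℕ} (A : CGraph c) (S : Set A.V) : CGraph c where
  V := ↥S
  G := A.G.induce S
  color := fun i => {v | (v : A.V) ∈ A.color i}

/-- A formula is `r`-local if its truth only depends on the subgraph induced by the
ball of radius `r` around its free variables. -/
def IsLocalFml {c m : ℕ} (r : ℕ) (φ : Fml c m) : Prop :=
  ∀ (A : CGraph c) (v : Fin m → A.V),
    Fml.Sat A φ v ↔
      Fml.Sat (A.induce (ballSet A.G r (Set.range v))) φ
        (fun i => ⟨v i, mem_ballSet_self A.G r (Set.mem_range_self i)⟩)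

/-- A formula is strongly `r`-local if it is `r`-local and, whenever it holds of a
tuple, the entries of the tuple are pairwise at distance at most `r`. -/
def IsStronglyLocalFml {c m : ℕ} (r : ℕ) (φ : Fml c m) : Prop :=
  IsLocalFml r φ ∧
    ∀ (A : CGraph c) (v : Fin m → A.V), Fml.Sat A φ v →
      ∀ i j : Fin m, A.G.Reachable (v i) (v j) ∧ A.G.dist (v i) (v j) ≤ r

/-- An immersive transduction: non-copying, with strongly local formulas. -/
def Transduction.Immersive (T : Transduction) : Prop :=
  T.k = 1 ∧ ∃ r : ℕ, IsStronglyLocalFml r T.I.ν ∧ IsStronglyLocalFml r T.I.η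

/-! ### Graph classes -/

/-- A set of graphs closed under isomorphism. -/
def IsoClosed (C : Set FGraph) : Prop :=
  ∀ G H : FGraph, Nonempty (G.G ≃g H.G) → G ∈ C → H ∈ C

/-- `H` is (isomorphic to) an induced subgraph of `G`. -/
def IsInducedSubgraphOf (H G : FGraph) : Prop :=
  ∃ f : H.V → G.V, Function.Injective f ∧ ∀ u v, H.G.Adj u v ↔ G.G.Adj (f u) (f v)

/-- A hereditary class: closed under induced subgraphs. -/
def HereditaryClass (C : Set FGraph) : Prop :=
  ∀ G ∈ C, ∀ H : FGraph, IsInducedSubgraphOf H G → H ∈ C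

/-- `H` is (isomorphic to) a subgraph of `G`. -/
def IsSubgraphOf (H G : FGraph) : Prop :=
  ∃ f : H.V → G.V, Function.Injective f ∧ ∀ u v, H.G.Adj u v → G.G.Adj (f u) (f v)

/-- The monotone closure of a class: all subgraphs of its members. -/
def monotoneClosure (C : Set FGraph) : Set FGraph :=
  {H | ∃ G ∈ C, IsSubgraphOf H G}

/-- `G` contains `K_{t,t}` as a subgraph. -/
def HasKtt {V : Type} (G : SimpleGraph V) (t : ℕ) : Prop :=
  ∃ a b : Fin t → V, Function.Injective a ∧ Function.Injective b ∧
    (∀ i j, a i ≠ b j) ∧ ∀ i j, G.Adj (a i) (b j)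

/-- A weakly sparse class: some `K_{t,t}` is a subgraph of no member. -/
def WeaklySparse (C : Set FGraph) : Prop := ∃ t : ℕ, ∀ G ∈ C, ¬ HasKtt G.G t

/-- Disjoint union of two graphs. -/
def sumGraph {V W : Type} (G : SimpleGraph V) (H : SimpleGraph W) : SimpleGraph (V ⊕ W) where
  Adj a b := match a, b with
    | .inl u, .inl v => G.Adj u v
    | .inr u, .inr v => H.Adj u v
    | _, _ => False
  symm := by
    refine ⟨?_⟩
    rintro (u | u) (v | v) h
    · exact G.adj_symm h
    · exact h.elim
    · exact h.elim
    · exact H.adj_symm h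
  loopless := by
    refine ⟨?_⟩
    rintro (v | v) h
    · exact G.loopless.irrefl _ h
    · exact H.loopless.irrefl _ h

/-- Disjoint union of finite graphs. -/
def FGraph.disjUnion (G H : FGraph) : FGraph where
  V := G.V ⊕ H.V
  G := sumGraph G.G H.G

/-- An addable class: closed under disjoint unions. -/
def Addable (C : Set FGraph) : Prop :=
  ∀ G ∈ C, ∀ H ∈ C, FGraph.disjUnion G H ∈ C

/-- The degree of a vertex. -/
noncomputable def degCard (G : FGraph) (v : G.V) : ℕ := Nat.card {u : G.V // G.G.Adj v u}

/-- A class with bounded maximum degree. -/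
def BddDegree (C : Set FGraph) : Prop := ∃ D : ℕ, ∀ G ∈ C, ∀ v : G.V, degCard G v ≤ D
/-! ### Further graph constructions and parameters -/

/-- Auxiliary instance. -/
instance {α : Type} [Finite α] : Finite (Option α) :=
  Finite.of_equiv _ (Equiv.optionEquivSumPUnit.{0,0} α).symm

/-- Adding an apex vertex adjacent to all vertices. -/
def apexGraph {V : Type} (G : SimpleGraph V) : SimpleGraph (Option V) where
  Adj a b := match a, b with
    | none, none => False
    | none, some _ => True
    | some _, none => True
    | some u, some v => G.Adj u v
  symm := by
    refine ⟨?_⟩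
    rintro (_ | u) (_ | v) h
    · exact h.elim
    · trivial
    · trivial
    · exact G.adj_symm h
  loopless := by
    refine ⟨?_⟩
    rintro (_ | v) h
    · exact h.elim
    · exact G.loopless.irrefl _ h

/-- The class `𝒞 ∨ K₁` of graphs of `𝒞` with an added apex. -/
def JoinK1 (C : Set FGraph) : Set FGraph :=
  {H | ∃ G ∈ C, Nonempty (H.G ≃g apexGraph G.G)}

/-- The ball of radius `r` around a vertex, as a finite graph. -/
def ballFGraph (G : FGraph) (r : ℕ) (v : G.V) : FGraph where
  V := ↥(ballSet G.G r {v})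
  G := G.G.induce (ballSet G.G r {v})

/-- The class `𝓛_r(ℱ)` of all balls of radius `r` of graphs of `ℱ`. -/
def LocClass (r : ℕ) (F : Set FGraph) : Set FGraph :=
  {H | ∃ G ∈ F, ∃ v : G.V, Nonempty (H.G ≃g (ballFGraph G r v).G)}

/-- Adding a pendant vertex adjacent only to `v`. -/
def pendantGraph {V : Type} (G : SimpleGraph V) (v : V) : SimpleGraph (Option V) where
  Adj a b := match a, b with
    | none, none => False
    | none, some w => w = v
    | some u, none => u = v
    | some u, some w => G.Adj u w
  symm := by
    refine ⟨?_⟩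
    rintro (_ | u) (_ | w) h
    · exact h.elim
    · exact h
    · exact h
    · exact G.adj_symm h
  loopless := by
    refine ⟨?_⟩
    rintro (_ | w) h
    · exact h.elim
    · exact G.loopless.irrefl _ h

/-- The finite graph obtained by adding a pendant vertex at `v`. -/
def FGraph.addPendant (G : FGraph) (v : G.V) : FGraph where
  V := Option G.V
  G := pendantGraph G.G v

/-- `G` is obtained from `H` by adding at most `h` vertices, joined arbitrarily. -/
def NearlyOf (h : ℕ) (G H : FGraph) : Prop :=
  ∃ f : H.V → G.V, Function.Injective f ∧
    (∀ u v, H.G.Adj u v ↔ G.G.Adj (f u) (f v)) ∧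
    Nat.card {v : G.V // v ∉ Set.range f} ≤ h

/-- The class `𝒞` is nearly `𝒟`. -/
def Nearly (C D : Set FGraph) : Prop :=
  ∃ h : ℕ, ∀ G ∈ C, ∃ H ∈ D, NearlyOf h G H

/-- The class `ℰ` of all edgeless graphs. -/
def EdgelessClass : Set FGraph := {G | ∀ u v : G.V, ¬ G.G.Adj u v}

/-- All members of the class have connected components of bounded size. -/
def BddComponents (D : Set FGraph) : Prop :=
  ∃ n : ℕ, ∀ G ∈ D, ∀ v : G.V, Nat.card {u : G.V // G.G.Reachable v u} ≤ n

/-- The class of all cubic (3-regular) graphs. -/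
def CubicClass : Set FGraph := {G | ∀ v : G.V, degCard G v = 3}

/-- The class `𝒫` of all paths. -/
def PathClass : Set FGraph :=
  {G | ∃ n : ℕ, Nonempty (G.G ≃g SimpleGraph.pathGraph n)}

/-- The `ℓ`-th power of a graph: two vertices are adjacent iff their distance
is between `1` and `ℓ`. -/
def powGraph {V : Type} (G : SimpleGraph V) (ℓ : ℕ) : SimpleGraph V where
  Adj u v := u ≠ v ∧ G.Reachable u v ∧ G.dist u v ≤ ℓ
  symm := by
    refine ⟨?_⟩
    rintro u v ⟨h1, h2, h3⟩
    exact ⟨h1.symm, h2.symm, by rwa [SimpleGraph.dist_comm]⟩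
  loopless := ⟨fun v h => h.1 rfl⟩

/-- The bandwidth of `G` is at most `ℓ` : `G` is a subgraph of the `ℓ`-th power
of a path. -/
def BandwidthLE (G : FGraph) (ℓ : ℕ) : Prop :=
  ∃ n : ℕ, ∃ f : G.V → Fin n, Function.Injective f ∧
    ∀ u v, G.G.Adj u v → (powGraph (SimpleGraph.pathGraph n) ℓ).Adj (f u) (f v)

/-- A class with bounded bandwidth. -/
def BddBandwidth (D : Set FGraph) : Prop := ∃ ℓ : ℕ, ∀ G ∈ D, BandwidthLE G ℓ

/-- The class of all cubic trees: trees all of whose vertices have degree 3 or 1. -/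
def CubicTreeClass : Set FGraph :=
  {G | G.G.IsTree ∧ ∀ v : G.V, degCard G v = 3 ∨ degCard G v = 1}

/-- `H` contains a clique on `s` vertices. -/
def HasCliqueN {V : Type} (H : SimpleGraph V) (s : ℕ) : Prop :=
  ∃ f : Fin s → V, Function.Injective f ∧ ∀ i j, i ≠ j → H.Adj (f i) (f j)

/-- A chordal graph: no induced cycle of length at least 4. -/
def IsChordal {V : Type} (H : SimpleGraph V) : Prop :=
  ∀ n : ℕ, 4 ≤ n → ¬ ∃ f : Fin n → V, Function.Injective f ∧
    ∀ i j, (SimpleGraph.cycleGraph n).Adj i j ↔ H.Adj (f i) (f j)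

/-- `tw(G) ≤ n` : `G` is a subgraph of a chordal graph with clique number at most `n+1`. -/
def TreewidthLE (G : FGraph) (n : ℕ) : Prop :=
  ∃ H : SimpleGraph G.V, IsChordal H ∧ G.G ≤ H ∧ ¬ HasCliqueN H (n + 2)

/-- A class with bounded treewidth. -/
def BddTreewidth (D : Set FGraph) : Prop := ∃ n : ℕ, ∀ G ∈ D, TreewidthLE G n

/-- An interval graph: the intersection graph of a family of real intervals. -/
def IsIntervalGraph {V : Type} (H : SimpleGraph V) : Prop :=
  ∃ l r : V → ℝ, (∀ v, l v ≤ r v) ∧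
    ∀ u v, u ≠ v → (H.Adj u v ↔ (l u ≤ r v ∧ l v ≤ r u))

/-- `pw(G) ≤ n` : `G` is a subgraph of an interval graph with clique number at
most `n+1`. -/
def PathwidthLE (G : FGraph) (n : ℕ) : Prop :=
  ∃ H : SimpleGraph G.V, IsIntervalGraph H ∧ G.G ≤ H ∧ ¬ HasCliqueN H (n + 2)

/-- The class `𝒫𝒲_n` of all graphs of pathwidth at most `n`. -/
def PWClass (n : ℕ) : Set FGraph := {G | PathwidthLE G n}

/-- `G` is a forest of depth at most `n` : it is acyclic and roots may be chosen,
one in each connected component, such that every vertex is at distance at most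
`n - 1` from the root of its component. -/
def ForestDepthLE (n : ℕ) (G : FGraph) : Prop :=
  G.G.IsAcyclic ∧ ∃ ρ : G.V → G.V,
    (∀ v, G.G.Reachable (ρ v) v ∧ G.G.dist (ρ v) v ≤ n - 1) ∧
    ∀ u v, G.G.Reachable u v → ρ u = ρ v

/-- The class `𝒯_n` of forests of depth at most `n`. -/
def TreeDepthClass (n : ℕ) : Set FGraph := {G | ForestDepthLE n G}

/-- A star forest: an acyclic graph with no path on four distinct vertices. -/
def IsStarForest (G : FGraph) : Prop :=
  G.G.IsAcyclic ∧ ∀ a b c d : G.V, G.G.Adj a b → G.G.Adj b c → G.G.Adj c d →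
    a = c ∨ b = d ∨ a = d

/-- The class `𝒯₂` of all star forests. -/
def StarForestClass : Set FGraph := {G | IsStarForest G}

/-- `H` is a depth-`r` shallow minor of `G` : it is obtained by contracting
pairwise disjoint connected subgraphs of radius at most `r` and deleting
vertices and edges. -/
def IsShallowMinor (r : ℕ) (H G : FGraph) : Prop :=
  ∃ φ : H.V → Set G.V,
    (∀ v, (φ v).Nonempty) ∧
    (∀ u v, u ≠ v → Disjoint (φ u) (φ v)) ∧
    (∀ v : H.V, ∃ c : ↥(φ v), ∀ u : ↥(φ v),
      (G.G.induce (φ v)).Reachable c u ∧ (G.G.induce (φ v)).dist c u ≤ r) ∧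
    (∀ u v : H.V, H.G.Adj u v → ∃ a ∈ φ u, ∃ b ∈ φ v, G.G.Adj a b)

/-- The average degree of `H` is at most `d`. -/
def AvgDegLE (H : FGraph) (d : ℕ) : Prop :=
  2 * Nat.card H.G.edgeSet ≤ d * Nat.card H.V

/-- A class of bounded expansion: for some `f : ℕ → ℕ`, every depth-`r` shallow
minor of a member has average degree at most `f r`. -/
def BoundedExpansion (C : Set FGraph) : Prop :=
  ∃ f : ℕ → ℕ, ∀ r : ℕ, ∀ G ∈ C, ∀ H : FGraph, IsShallowMinor r H G → AvgDegLE H (f r)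

/-- A proper coloring `f` of `G` with `n` colors is a star coloring if no path on
four vertices receives only two colors. -/
def IsStarColoring {V : Type} (G : SimpleGraph V) (n : ℕ) (f : V → Fin n) : Prop :=
  (∀ u v, G.Adj u v → f u ≠ f v) ∧
  ∀ a b c d, G.Adj a b → G.Adj b c → G.Adj c d → a ≠ c → b ≠ d → a ≠ d →
    ¬ (f a = f c ∧ f b = f d)

/-- A class with bounded star chromatic number. -/
def BddStarChrom (C : Set FGraph) : Prop :=
  ∃ n : ℕ, ∀ G ∈ C, ∃ f : G.V → Fin n, IsStarColoring G.G n f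


namespace LocGaif
open SimpleGraph



/-- Guarded formulas over colors indexed by a type `κ`. -/
inductive GFml (κ : Type) : ℕ → Type where
  | fls {m} : GFml κ m
  | eq {m} : Fin m → Fin m → GFml κ m
  | adj {m} : Fin m → Fin m → GFml κ m
  | col {m} : κ → Fin m → GFml κ m
  | not {m} : GFml κ m → GFml κ m
  | or {m} : GFml κ m → GFml κ m → GFml κ m
  | gex {m} : Fin m → ℕ → GFml κ (m + 1) → GFml κ m

/-- `u` and `v` are within distance `R`. -/
def Near {V : Type} (G : SimpleGraph V) (R : ℕ) (u v : V) : Prop :=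
  G.Reachable u v ∧ G.dist u v ≤ R

/-- Semantics of guarded formulas. -/
def SatG {κ : Type} {V : Type} (G : SimpleGraph V) (C : κ → Set V) :
    {m : ℕ} → GFml κ m → (Fin m → V) → Prop
  | _, .fls, _ => False
  | _, .eq i j, v => v i = v j
  | _, .adj i j, v => G.Adj (v i) (v j)
  | _, .col k i, v => v i ∈ C k
  | _, .not θ, v => ¬ SatG G C θ v
  | _, .or θ₁ θ₂, v => SatG G C θ₁ v ∨ SatG G C θ₂ v
  | _, .gex i R θ, v => ∃ w, Near G R (v i) w ∧ SatG G C θ (Fin.snoc v w)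

/-- Radius bound of a guarded formula. -/
def radG {κ : Type} : {m : ℕ} → GFml κ m → ℕ
  | _, .fls => 0
  | _, .eq _ _ => 0
  | _, .adj _ _ => 0
  | _, .col _ _ => 0
  | _, .not θ => radG θ
  | _, .or θ₁ θ₂ => max (radG θ₁) (radG θ₂)
  | _, .gex _ R θ => R + radG θ

/-- Extension of a variable renaming under a quantifier. -/
def extVar {m m' : ℕ} (ρ : Fin m → Fin m') : Fin (m + 1) → Fin (m' + 1) :=
  Fin.snoc (fun j => (ρ j).castSucc) (Fin.last m')

/-- Renaming of free variables. -/
def rename {κ : Type} : {m m' : ℕ} → (Fin m → Fin m') → GFml κ m → GFml κ m'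
  | _, _, _, .fls => .fls
  | _, _, ρ, .eq i j => .eq (ρ i) (ρ j)
  | _, _, ρ, .adj i j => .adj (ρ i) (ρ j)
  | _, _, ρ, .col k i => .col k (ρ i)
  | _, _, ρ, .not θ => .not (rename ρ θ)
  | _, _, ρ, .or θ₁ θ₂ => .or (rename ρ θ₁) (rename ρ θ₂)
  | _, _, ρ, .gex i R θ => .gex (ρ i) R (rename (extVar ρ) θ)

/-- Renaming of colors. -/
def crename {κ κ' : Type} (g : κ → κ') : {m : ℕ} → GFml κ m → GFml κ' m
  | _, .fls => .fls
  | _, .eq i j => .eq i j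
  | _, .adj i j => .adj i j
  | _, .col k i => .col (g k) i
  | _, .not θ => .not (crename g θ)
  | _, .or θ₁ θ₂ => .or (crename g θ₁) (crename g θ₂)
  | _, .gex i R θ => .gex i R (crename g θ)

lemma snoc_comp_extVar {V : Type} {m m' : ℕ} (ρ : Fin m → Fin m') (v : Fin m' → V) (w : V) :
    (Fin.snoc v w : Fin (m' + 1) → V) ∘ extVar ρ = Fin.snoc (v ∘ ρ) w := by
  funext j
  refine Fin.lastCases ?_ (fun j => ?_) j <;>
    simp [extVar, Fin.snoc_castSucc, Fin.snoc_last, Function.comp]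

lemma satG_rename {κ V : Type} (G : SimpleGraph V) (C : κ → Set V) :
    ∀ {m m'} (θ : GFml κ m) (ρ : Fin m → Fin m') (v : Fin m' → V),
      SatG G C (rename ρ θ) v ↔ SatG G C θ (v ∘ ρ)
  | _, _, .fls, _, _ => Iff.rfl
  | _, _, .eq i j, _, _ => Iff.rfl
  | _, _, .adj i j, _, _ => Iff.rfl
  | _, _, .col k i, _, _ => Iff.rfl
  | _, _, .not θ, ρ, v => by simp [rename, SatG, satG_rename G C θ ρ v]
  | _, _, .or θ₁ θ₂, ρ, v => by
      simp [rename, SatG, satG_rename G C θ₁ ρ v, satG_rename G C θ₂ ρ v]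
  | _, _, .gex i R θ, ρ, v => by
      simp only [rename, SatG]
      refine exists_congr fun w => and_congr Iff.rfl ?_
      rw [satG_rename G C θ (extVar ρ) (Fin.snoc v w), snoc_comp_extVar]

lemma satG_crename {κ κ' V : Type} (G : SimpleGraph V) (C : κ' → Set V) (g : κ → κ') :
    ∀ {m} (θ : GFml κ m) (v : Fin m → V),
      SatG G C (crename g θ) v ↔ SatG G (C ∘ g) θ v
  | _, .fls, _ => Iff.rfl
  | _, .eq i j, _ => Iff.rfl
  | _, .adj i j, _ => Iff.rfl
  | _, .col k i, _ => Iff.rfl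
  | _, .not θ, v => by simp [crename, SatG, satG_crename G C g θ v]
  | _, .or θ₁ θ₂, v => by
      simp [crename, SatG, satG_crename G C g θ₁ v, satG_crename G C g θ₂ v]
  | _, .gex i R θ, v => by
      simp only [crename, SatG]
      exact exists_congr fun w => and_congr Iff.rfl (satG_crename G C g θ _)

lemma radG_rename {κ : Type} :
    ∀ {m m'} (θ : GFml κ m) (ρ : Fin m → Fin m'), radG (rename ρ θ) = radG θ
  | _, _, .fls, _ => rfl
  | _, _, .eq _ _, _ => rfl
  | _, _, .adj _ _, _ => rfl
  | _, _, .col _ _, _ => rfl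
  | _, _, .not θ, ρ => radG_rename θ ρ
  | _, _, .or θ₁ θ₂, ρ => by
      simp [rename, radG, radG_rename θ₁ ρ, radG_rename θ₂ ρ]
  | _, _, .gex i R θ, ρ => by simp [rename, radG, radG_rename θ (extVar ρ)]

lemma radG_crename {κ κ' : Type} (g : κ → κ') :
    ∀ {m} (θ : GFml κ m), radG (crename g θ) = radG θ
  | _, .fls => rfl
  | _, .eq _ _ => rfl
  | _, .adj _ _ => rfl
  | _, .col _ _ => rfl
  | _, .not θ => radG_crename g θ
  | _, .or θ₁ θ₂ => by simp [crename, radG, radG_crename g θ₁, radG_crename g θ₂]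
  | _, .gex i R θ => by simp [crename, radG, radG_crename g θ]

/-! ### Derived connectives -/

def gtop {κ : Type} {m : ℕ} : GFml κ m := .not .fls

def gand {κ : Type} {m : ℕ} (a b : GFml κ m) : GFml κ m := .not (.or (.not a) (.not b))

@[simp] lemma satG_gtop {κ V : Type} (G : SimpleGraph V) (C : κ → Set V) {m} (v : Fin m → V) :
    SatG G C gtop v ↔ True := by simp [gtop, SatG]

@[simp] lemma satG_gand {κ V : Type} (G : SimpleGraph V) (C : κ → Set V) {m}
    (a b : GFml κ m) (v : Fin m → V) :
    SatG G C (gand a b) v ↔ SatG G C a v ∧ SatG G C b v := by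
  simp [gand, SatG]

def bigOr {κ : Type} {m : ℕ} (L : List (GFml κ m)) : GFml κ m := L.foldr .or .fls

lemma satG_bigOr {κ V : Type} (G : SimpleGraph V) (C : κ → Set V) {m}
    (L : List (GFml κ m)) (v : Fin m → V) :
    SatG G C (bigOr L) v ↔ ∃ θ ∈ L, SatG G C θ v := by
  induction L with
  | nil => simp [bigOr, SatG]
  | cons a t ih =>
      simp only [bigOr, List.foldr_cons, SatG, List.mem_cons] at ih ⊢
      rw [ih]; constructor
      · rintro (h | ⟨θ, h1, h2⟩); exacts [⟨a, Or.inl rfl, h⟩, ⟨θ, Or.inr h1, h2⟩]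
      · rintro ⟨θ, (rfl | h1), h2⟩; exacts [Or.inl h2, Or.inr ⟨θ, h1, h2⟩]

def bigAnd {κ : Type} {m : ℕ} (L : List (GFml κ m)) : GFml κ m := .not (bigOr (L.map .not))

lemma satG_bigAnd {κ V : Type} (G : SimpleGraph V) (C : κ → Set V) {m}
    (L : List (GFml κ m)) (v : Fin m → V) :
    SatG G C (bigAnd L) v ↔ ∀ θ ∈ L, SatG G C θ v := by
  simp only [bigAnd, SatG, satG_bigOr]
  constructor
  · intro h θ hθ
    by_contra hn
    exact h ⟨.not θ, List.mem_map_of_mem hθ, hn⟩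
  · rintro h ⟨θ', hθ', hs⟩
    obtain ⟨θ, hθ, rfl⟩ := List.mem_map.mp hθ'
    exact hs (h θ hθ)



variable {V : Type} {G : SimpleGraph V}

lemma Near.refl (R : ℕ) (u : V) : Near G R u u :=
  ⟨Reachable.refl u, by rw [SimpleGraph.dist_self]; exact Nat.zero_le R⟩

lemma Near.symm {R : ℕ} {u v : V} (h : Near G R u v) : Near G R v u :=
  ⟨h.1.symm, by rw [SimpleGraph.dist_comm]; exact h.2⟩

lemma Near.mono {R R' : ℕ} (hR : R ≤ R') {u v : V} (h : Near G R u v) : Near G R' u v :=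
  ⟨h.1, h.2.trans hR⟩

lemma Near.trans {R S : ℕ} {u v w : V} (h : Near G R u v) (h' : Near G S v w) :
    Near G (R + S) u w := by
  refine ⟨h.1.trans h'.1, ?_⟩
  obtain ⟨p, hp⟩ := h.1.exists_walk_length_eq_dist
  obtain ⟨q, hq⟩ := h'.1.exists_walk_length_eq_dist
  calc G.dist u w ≤ (p.append q).length := SimpleGraph.dist_le _
    _ = G.dist u v + G.dist v w := by rw [SimpleGraph.Walk.length_append, hp, hq]
    _ ≤ R + S := Nat.add_le_add h.2 h'.2

lemma near_zero_iff {u v : V} : Near G 0 u v ↔ u = v := by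
  constructor
  · rintro ⟨hr, hd⟩
    exact hr.dist_eq_zero_iff.mp (Nat.le_zero.mp hd)
  · rintro rfl; exact Near.refl 0 u

lemma near_succ_iff {R : ℕ} {u v : V} :
    Near G (R + 1) u v ↔ Near G R u v ∨ ∃ z, G.Adj u z ∧ Near G R z v := by
  constructor
  · rintro ⟨hr, hd⟩
    obtain ⟨p, hp⟩ := hr.exists_walk_length_eq_dist
    cases p with
    | nil => exact Or.inl ⟨hr, by rw [SimpleGraph.dist_self]; exact Nat.zero_le R⟩
    | @cons _ z _ ha q =>
      by_cases hle : G.dist u v ≤ R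
      · exact Or.inl ⟨hr, hle⟩
      · refine Or.inr ⟨z, ha, q.reachable, ?_⟩
        have := SimpleGraph.dist_le q
        simp [SimpleGraph.Walk.length_cons] at hp
        omega
  · rintro (h | ⟨z, ha, hz⟩)
    · exact h.mono (Nat.le_succ R)
    · have : Near G 1 u z := ⟨ha.reachable, SimpleGraph.dist_le (ha.toWalk)⟩
      have := Near.trans this hz
      rwa [Nat.add_comm 1 R] at this

/-- Transfer a walk whose support lies in `W` to the induced subgraph. -/
lemma exists_induced_walk_of_support {W : Set V} :
    ∀ {u v : V} (p : G.Walk u v) (_ : ∀ x ∈ p.support, x ∈ W),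
      ∃ q : (G.induce W).Walk ⟨u, by simp_all [SimpleGraph.Walk.support]⟩
        ⟨v, by simp_all [SimpleGraph.Walk.end_mem_support]⟩, q.length = p.length := by
  intro u v p
  induction p with
  | nil => intro h; exact ⟨SimpleGraph.Walk.nil, rfl⟩
  | @cons a b c ha q ih =>
    intro h
    have hb : b ∈ W := h b (by simp [SimpleGraph.Walk.support_cons])
    obtain ⟨q', hq'⟩ := ih (fun x hx => h x (by simp [SimpleGraph.Walk.support_cons, hx]))
    have ha' : (G.induce W).Adj ⟨a, h a (by simp [SimpleGraph.Walk.support_cons])⟩ ⟨b, hb⟩ := ha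
    exact ⟨SimpleGraph.Walk.cons ha' q', by simp [SimpleGraph.Walk.length_cons, hq']⟩

/-- Near in an induced subgraph implies near in the ambient graph. -/
lemma Near.of_induce {W : Set V} {R : ℕ} {u v : ↥W}
    (h : Near (G.induce W) R u v) : Near G R (u : V) (v : V) := by
  obtain ⟨p, hp⟩ := h.1.exists_walk_length_eq_dist
  refine ⟨(p.map (SimpleGraph.Embedding.induce W).toHom).reachable, ?_⟩
  calc G.dist (u : V) (v : V) ≤ (p.map (SimpleGraph.Embedding.induce W).toHom).length :=
        SimpleGraph.dist_le _
    _ = (G.induce W).dist u v := by rw [SimpleGraph.Walk.length_map, hp]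
    _ ≤ R := h.2

/-- Every vertex of a walk of length `≤ R` starting at `u` is `R`-near `u`. -/
lemma near_of_mem_support {u v : V} (p : G.Walk u v) {x : V} (hx : x ∈ p.support) :
    Near G p.length u x := by
  classical
  refine ⟨(p.takeUntil x hx).reachable, ?_⟩
  exact (SimpleGraph.dist_le _).trans (SimpleGraph.Walk.length_takeUntil_le p hx)

/-- If `u ∈ W` and every vertex `R`-near `u` is in `W`, then nearness transfers
to the induced subgraph. -/
lemma Near.induce_of_ball {W : Set V} {R : ℕ} {u v : V} (h : Near G R u v)
    (hu : u ∈ W) (hball : ∀ x, Near G R u x → x ∈ W) :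
    ∃ hv : v ∈ W, Near (G.induce W) R (⟨u, hu⟩ : ↥W) ⟨v, hv⟩ := by
  obtain ⟨p, hp⟩ := h.1.exists_walk_length_eq_dist
  have hsup : ∀ x ∈ p.support, x ∈ W := by
    intro x hx
    exact hball x ((near_of_mem_support p hx).mono (by rw [hp]; exact h.2))
  obtain ⟨q, hq⟩ := exists_induced_walk_of_support p hsup
  exact ⟨hball v h, q.reachable, (SimpleGraph.dist_le q).trans (by rw [hq, hp]; exact h.2)⟩

lemma ballSet_mono_r {r r' : ℕ} (h : r ≤ r') {S : Set V} :
    ballSet G r S ⊆ ballSet G r' S := by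
  rintro x ⟨u, hu, hr, hd⟩
  exact ⟨u, hu, hr, hd.trans h⟩



variable {V : Type} {G : SimpleGraph V}

lemma near_succ_iff' {R : ℕ} {u v : V} :
    Near G (R + 1) u v ↔ Near G R u v ∨ ∃ z, Near G 1 u z ∧ Near G R z v := by
  constructor
  · intro h
    rcases near_succ_iff.mp h with h | ⟨z, ha, hz⟩
    · exact Or.inl h
    · exact Or.inr ⟨z, ⟨ha.reachable, SimpleGraph.dist_le ha.toWalk⟩, hz⟩
  · rintro (h | ⟨z, h1, h2⟩)
    · exact h.mono (Nat.le_succ R)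
    · have := h1.trans h2
      rwa [Nat.add_comm 1 R] at this

/-- A guarded formula expressing `Near G R (v a) (v b)`. -/
def nearG {κ : Type} : (R : ℕ) → {m : ℕ} → Fin m → Fin m → GFml κ m
  | 0, _, a, b => .eq a b
  | R + 1, m, a, b =>
      .or (nearG R a b) (.gex a 1 (nearG R (Fin.last m) b.castSucc))

lemma satG_nearG {κ : Type} (C : κ → Set V) :
    ∀ (R : ℕ) {m : ℕ} (a b : Fin m) (v : Fin m → V),
      SatG G C (nearG R a b) v ↔ Near G R (v a) (v b) := by
  intro R
  induction R with
  | zero => intro m a b v; simpa [nearG, SatG] using near_zero_iff.symm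
  | succ R ih =>
    intro m a b v
    rw [near_succ_iff']
    simp only [nearG, SatG, ih]
    refine or_congr Iff.rfl (exists_congr fun z => and_congr Iff.rfl ?_)
    simp only [Fin.snoc_last, Fin.snoc_castSucc]

lemma radG_nearG {κ : Type} :
    ∀ (R : ℕ) {m : ℕ} (a b : Fin m), radG (nearG (κ := κ) R a b) ≤ R := by
  intro R
  induction R with
  | zero => intro m a b; simp [nearG, radG]
  | succ R ih =>
    intro m a b
    simp only [nearG, radG, max_le_iff]
    exact ⟨(ih a b).trans (Nat.le_succ R), by have := ih (Fin.last m) (b.castSucc); omega⟩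



variable {V : Type} {G : SimpleGraph V}

lemma mem_ballSet {r : ℕ} {S : Set V} {x : V} :
    x ∈ ballSet G r S ↔ ∃ u ∈ S, Near G r u x := Iff.rfl

/-- The key locality lemma: a guarded formula of radius `≤ r` can be evaluated in
any induced subgraph containing the ball of radius `radG θ` around the tuple. -/
lemma satG_induce {κ : Type} :
    ∀ {m : ℕ} (θ : GFml κ m) {V : Type} (G : SimpleGraph V) (C : κ → Set V)
      (W : Set V) (v : Fin m → V) (hv : ∀ i, v i ∈ W)
      (_ : ballSet G (radG θ) (Set.range v) ⊆ W),
      SatG G C θ v ↔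
        SatG (G.induce W) (fun k => {x : ↥W | (x : V) ∈ C k}) θ (fun i => ⟨v i, hv i⟩)
  | _, .fls, _, _, _, _, _, _, _ => Iff.rfl
  | _, .eq i j, _, G, C, W, v, hv, _ => by
      simp only [SatG, Subtype.mk.injEq]
  | _, .adj i j, _, G, C, W, v, hv, _ => by
      simp only [SatG, SimpleGraph.comap_adj, Function.Embedding.coe_subtype]
  | _, .col k i, _, G, C, W, v, hv, _ => Iff.rfl
  | _, .not θ, _, G, C, W, v, hv, hW => by
      simp only [SatG]
      rw [satG_induce θ G C W v hv hW]
  | _, .or θ₁ θ₂, _, G, C, W, v, hv, hW => by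
      simp only [SatG]
      rw [satG_induce θ₁ G C W v hv (le_trans (ballSet_mono_r (le_max_left _ _)) hW),
        satG_induce θ₂ G C W v hv (le_trans (ballSet_mono_r (le_max_right _ _)) hW)]
  | _, .gex i R θ, _, G, C, W, v, hv, hW => by
      simp only [SatG]
      have hball : ∀ x, Near G R (v i) x → x ∈ W := by
        intro x hx
        exact hW ⟨v i, Set.mem_range_self i, hx.mono (Nat.le_add_right R _)⟩
      have key : ∀ w : _, Near G R (v i) w →
          ((∀ j, (Fin.snoc v w : Fin _ → _) j ∈ W) ∧
            ballSet G (radG θ) (Set.range (Fin.snoc v w)) ⊆ W) := by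
        intro w hnear
        have hwW : w ∈ W := hball w hnear
        have hv' : ∀ j, (Fin.snoc v w : Fin _ → _) j ∈ W := by
          refine Fin.lastCases ?_ (fun j => ?_)
          · rw [Fin.snoc_last]; exact hwW
          · rw [Fin.snoc_castSucc]; exact hv j
        refine ⟨hv', ?_⟩
        rintro x ⟨u, ⟨j, rfl⟩, hx⟩
        rcases Fin.eq_castSucc_or_eq_last j with ⟨j', rfl⟩ | rfl
        · rw [Fin.snoc_castSucc] at hx
          exact hW ⟨v j', Set.mem_range_self j', Near.mono (Nat.le_add_left _ _) hx⟩
        · rw [Fin.snoc_last] at hx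
          exact hW ⟨v i, Set.mem_range_self i, hnear.trans hx⟩
      constructor
      · rintro ⟨w, hnear, hs⟩
        obtain ⟨hv', hW'⟩ := key w hnear
        obtain ⟨hwW, hnear'⟩ := hnear.induce_of_ball (hv i) hball
        refine ⟨⟨w, hwW⟩, hnear', ?_⟩
        have htup : (Fin.snoc (fun i => (⟨v i, hv i⟩ : ↥W)) ⟨w, hwW⟩ : Fin _ → ↥W)
            = fun j => ⟨(Fin.snoc v w : Fin _ → _) j, hv' j⟩ := by
          funext j
          rcases Fin.eq_castSucc_or_eq_last j with ⟨j', rfl⟩ | rfl <;>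
            exact Subtype.ext (by simp [Fin.snoc_castSucc, Fin.snoc_last])
        rw [htup]
        exact (satG_induce θ G C W (Fin.snoc v w) hv' hW').mp hs
      · rintro ⟨⟨w, hwW⟩, hnear', hs⟩
        have hnear : Near G R (v i) w := Near.of_induce hnear'
        obtain ⟨hv', hW'⟩ := key w hnear
        refine ⟨w, hnear, ?_⟩
        rw [satG_induce θ G C W (Fin.snoc v w) hv' hW']
        have htup : (Fin.snoc (fun i => (⟨v i, hv i⟩ : ↥W)) ⟨w, hwW⟩ : Fin _ → ↥W)
            = fun j => ⟨(Fin.snoc v w : Fin _ → _) j, hv' j⟩ := by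
          funext j
          rcases Fin.eq_castSucc_or_eq_last j with ⟨j', rfl⟩ | rfl <;>
            exact Subtype.ext (by simp [Fin.snoc_castSucc, Fin.snoc_last])
        rw [htup] at hs
        exact hs



/-- `θ`'s satisfaction depends only on the coordinates in `S`. -/
def depOnly {κ : Type} {m : ℕ} (θ : GFml κ m) (S : Set (Fin m)) : Prop :=
  ∀ {V : Type} (G : SimpleGraph V) (C : κ → Set V) (v v' : Fin m → V),
    (∀ i ∈ S, v i = v' i) → (SatG G C θ v ↔ SatG G C θ v')

lemma depOnly_mono {κ m} {θ : GFml κ m} {S S' : Set (Fin m)} (h : depOnly θ S)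
    (hss : S ⊆ S') : depOnly θ S' :=
  fun G C v v' hvv => h G C v v' fun i hi => hvv i (hss hi)

lemma depOnly_gtop {κ m} (S : Set (Fin m)) : depOnly (gtop (κ := κ)) S := by
  intro V G C v v' _; simp

lemma depOnly_not {κ m} {θ : GFml κ m} {S} (h : depOnly θ S) : depOnly (.not θ) S := by
  intro V G C v v' hvv; simp only [SatG]; rw [h G C v v' hvv]

lemma depOnly_gand {κ m} {a b : GFml κ m} {S} (ha : depOnly a S) (hb : depOnly b S) :
    depOnly (gand a b) S := by
  intro V G C v v' hvv
  simp only [satG_gand]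
  rw [ha G C v v' hvv, hb G C v v' hvv]

/-- The "drop the quantified variable to `i`" renaming. -/
def rhoShr {m : ℕ} (i : Fin m) : Fin (m + 1) → Fin m := Fin.snoc (fun j => j) i

lemma comp_rhoShr {V : Type} {m : ℕ} (i : Fin m) (v : Fin m → V) :
    v ∘ rhoShr i = Fin.snoc v (v i) := by
  funext j
  rcases Fin.eq_castSucc_or_eq_last j with ⟨j', rfl⟩ | rfl <;>
    simp [rhoShr, Fin.snoc_castSucc, Fin.snoc_last, Function.comp]

/-- DNF-style combination for negation of a disjunction of pairs. -/
def negList {κ m} : List (GFml κ m × GFml κ m) → List (GFml κ m × GFml κ m)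
  | [] => [(gtop, gtop)]
  | p :: t =>
      ((negList t).map fun q => (gand (.not p.1) q.1, q.2)) ++
      ((negList t).map fun q => (q.1, gand (.not p.2) q.2))

lemma negList_dep {κ m} {S T : Set (Fin m)} :
    ∀ (L : List (GFml κ m × GFml κ m)),
      (∀ p ∈ L, depOnly p.1 S ∧ depOnly p.2 T) →
      ∀ q ∈ negList L, depOnly q.1 S ∧ depOnly q.2 T := by
  intro L
  induction L with
  | nil =>
    rintro _ q hq
    simp only [negList, List.mem_singleton] at hq
    subst hq
    exact ⟨depOnly_gtop S, depOnly_gtop T⟩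
  | cons p t ih =>
    intro hL q hq
    have hp := hL p (List.mem_cons_self)
    have ht : ∀ p' ∈ t, depOnly p'.1 S ∧ depOnly p'.2 T :=
      fun p' hp' => hL p' (List.mem_cons_of_mem p hp')
    simp only [negList, List.mem_append, List.mem_map] at hq
    rcases hq with ⟨q', hq', rfl⟩ | ⟨q', hq', rfl⟩
    · exact ⟨depOnly_gand (depOnly_not hp.1) (ih ht q' hq').1, (ih ht q' hq').2⟩
    · exact ⟨(ih ht q' hq').1, depOnly_gand (depOnly_not hp.2) (ih ht q' hq').2⟩

lemma negList_sem {κ m} {V : Type} (G : SimpleGraph V) (C : κ → Set V) (v : Fin m → V) :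
    ∀ (L : List (GFml κ m × GFml κ m)),
      ((∀ p ∈ L, ¬(SatG G C p.1 v ∧ SatG G C p.2 v)) ↔
        ∃ q ∈ negList L, SatG G C q.1 v ∧ SatG G C q.2 v) := by
  intro L
  induction L with
  | nil => simp [negList]
  | cons p t ih =>
    simp only [negList, List.mem_append, List.mem_map, List.mem_cons]
    constructor
    · intro h
      have hp := h p (Or.inl rfl)
      have ht : ∀ p' ∈ t, ¬(SatG G C p'.1 v ∧ SatG G C p'.2 v) :=
        fun p' hp' => h p' (Or.inr hp')
      obtain ⟨q, hq, hq1, hq2⟩ := ih.mp ht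
      rcases Classical.em (SatG G C p.1 v) with h1 | h1
      · have h2 : ¬ SatG G C p.2 v := fun h2 => hp ⟨h1, h2⟩
        exact ⟨(q.1, gand (.not p.2) q.2), Or.inr ⟨q, hq, rfl⟩, hq1, by simp [SatG, h2, hq2]⟩
      · exact ⟨(gand (.not p.1) q.1, q.2), Or.inl ⟨q, hq, rfl⟩, by simp [SatG, h1, hq1], hq2⟩
    · rintro ⟨q, (⟨q', hq', rfl⟩ | ⟨q', hq', rfl⟩), hq1, hq2⟩
      · rw [satG_gand] at hq1
        intro p' hp'
        rcases hp' with rfl | hp'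
        · exact fun hc => hq1.1 hc.1
        · exact ih.mpr ⟨q', hq', hq1.2, hq2⟩ p' hp'
      · rw [satG_gand] at hq2
        intro p' hp'
        rcases hp' with rfl | hp'
        · exact fun hc => hq2.1 hc.2
        · exact ih.mpr ⟨q', hq', hq1, hq2.2⟩ p' hp'



lemma not_near_mono {V : Type} {G : SimpleGraph V} {t t' : ℕ} (h : t ≤ t') {u v : V}
    (hn : ¬ Near G t' u v) : ¬ Near G t u v := fun hc => hn (hc.mono h)

/-- The splitting lemma: over well-separated clusters, a guarded formula is
equivalent to a finite disjunction of conjunctions of cluster-local formulas. -/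
lemma split {κ : Type} : ∀ {m : ℕ} (θ : GFml κ m) (f : Fin m → Bool),
    ∃ L : List (GFml κ m × GFml κ m),
      (∀ p ∈ L, depOnly p.1 {i | f i = false} ∧ depOnly p.2 {i | f i = true}) ∧
      ∀ {V : Type} (G : SimpleGraph V) (C : κ → Set V) (v : Fin m → V),
        (∀ i j, f i = false → f j = true →
          ¬ Near G (2 * radG θ + 1) (v i) (v j)) →
        (SatG G C θ v ↔ ∃ p ∈ L, SatG G C p.1 v ∧ SatG G C p.2 v) := by
  intro m θ
  induction θ with
  | fls =>
    intro f
    exact ⟨[], by simp, by intro V G C v _; simp [SatG]⟩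
  | @eq m i j =>
    intro f
    cases hfi : f i <;> cases hfj : f j
    · refine ⟨[(.eq i j, gtop)], ?_, ?_⟩
      · rintro p hp
        simp only [List.mem_singleton] at hp; subst hp
        refine ⟨?_, depOnly_gtop _⟩
        intro V G C v v' hvv
        simp only [SatG]
        rw [hvv i hfi, hvv j hfj]
      · intro V G C v _
        simp [SatG]
    · refine ⟨[], by simp, ?_⟩
      intro V G C v hsep
      simp only [SatG, List.not_mem_nil]
      constructor
      · intro h
        exact absurd (h ▸ Near.refl _ (v i)) (hsep i j hfi hfj)
      · rintro ⟨p, h, -⟩; exact absurd h (by simp)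
    · refine ⟨[], by simp, ?_⟩
      intro V G C v hsep
      simp only [SatG, List.not_mem_nil]
      constructor
      · intro h
        exact absurd (h ▸ Near.refl _ (v j)).symm (by simpa [h] using hsep j i hfj hfi)
      · rintro ⟨p, h, -⟩; exact absurd h (by simp)
    · refine ⟨[(gtop, .eq i j)], ?_, ?_⟩
      · rintro p hp
        simp only [List.mem_singleton] at hp; subst hp
        refine ⟨depOnly_gtop _, ?_⟩
        intro V G C v v' hvv
        simp only [SatG]
        rw [hvv i hfi, hvv j hfj]
      · intro V G C v _
        simp [SatG]
  | @adj m i j =>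
    intro f
    cases hfi : f i <;> cases hfj : f j
    · refine ⟨[(.adj i j, gtop)], ?_, ?_⟩
      · rintro p hp
        simp only [List.mem_singleton] at hp; subst hp
        refine ⟨?_, depOnly_gtop _⟩
        intro V G C v v' hvv
        simp only [SatG]
        rw [hvv i hfi, hvv j hfj]
      · intro V G C v _
        simp [SatG]
    · refine ⟨[], by simp, ?_⟩
      intro V G C v hsep
      simp only [SatG, List.not_mem_nil]
      constructor
      · intro h
        refine absurd (Near.mono (show 1 ≤ 2 * radG (GFml.adj (κ := κ) i j) + 1 by omega)
          ⟨h.reachable, ?_⟩) (hsep i j hfi hfj)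
        simpa using SimpleGraph.dist_le h.toWalk
      · rintro ⟨p, h, -⟩; exact absurd h (by simp)
    · refine ⟨[], by simp, ?_⟩
      intro V G C v hsep
      simp only [SatG, List.not_mem_nil]
      constructor
      · intro h
        refine absurd (Near.mono (show 1 ≤ 2 * radG (GFml.adj (κ := κ) i j) + 1 by omega)
          ⟨h.symm.reachable, ?_⟩) (hsep j i hfj hfi)
        simpa using SimpleGraph.dist_le h.symm.toWalk
      · rintro ⟨p, h, -⟩; exact absurd h (by simp)
    · refine ⟨[(gtop, .adj i j)], ?_, ?_⟩
      · rintro p hp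
        simp only [List.mem_singleton] at hp; subst hp
        refine ⟨depOnly_gtop _, ?_⟩
        intro V G C v v' hvv
        simp only [SatG]
        rw [hvv i hfi, hvv j hfj]
      · intro V G C v _
        simp [SatG]
  | @col m k i =>
    intro f
    cases hfi : f i
    · refine ⟨[(.col k i, gtop)], ?_, ?_⟩
      · rintro p hp
        simp only [List.mem_singleton] at hp; subst hp
        refine ⟨?_, depOnly_gtop _⟩
        intro V G C v v' hvv
        simp only [SatG]
        rw [hvv i hfi]
      · intro V G C v _
        simp [SatG]
    · refine ⟨[(gtop, .col k i)], ?_, ?_⟩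
      · rintro p hp
        simp only [List.mem_singleton] at hp; subst hp
        refine ⟨depOnly_gtop _, ?_⟩
        intro V G C v v' hvv
        simp only [SatG]
        rw [hvv i hfi]
      · intro V G C v _
        simp [SatG]
  | @not m θ ih =>
    intro f
    obtain ⟨L, hdep, hsem⟩ := ih f
    refine ⟨negList L, negList_dep L hdep, ?_⟩
    intro V G C v hsep
    have : SatG G C (.not θ) v ↔ ∀ p ∈ L, ¬(SatG G C p.1 v ∧ SatG G C p.2 v) := by
      simp only [SatG]
      rw [hsem G C v hsep]
      constructor
      · intro h p hp hc; exact h ⟨p, hp, hc⟩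
      · rintro h ⟨p, hp, hc⟩; exact h p hp hc
    rw [this, negList_sem]
  | @or m θ₁ θ₂ ih₁ ih₂ =>
    intro f
    obtain ⟨L₁, hdep₁, hsem₁⟩ := ih₁ f
    obtain ⟨L₂, hdep₂, hsem₂⟩ := ih₂ f
    refine ⟨L₁ ++ L₂, ?_, ?_⟩
    · intro p hp
      rcases List.mem_append.mp hp with h | h
      exacts [hdep₁ p h, hdep₂ p h]
    · intro V G C v hsep
      have h₁ : ∀ i j, f i = false → f j = true →
          ¬ Near G (2 * radG θ₁ + 1) (v i) (v j) := by
        intro i j hi hj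
        exact not_near_mono
          (by have := le_max_left (radG θ₁) (radG θ₂); simp only [radG]; omega)
          (hsep i j hi hj)
      have h₂ : ∀ i j, f i = false → f j = true →
          ¬ Near G (2 * radG θ₂ + 1) (v i) (v j) := by
        intro i j hi hj
        exact not_near_mono
          (by have := le_max_right (radG θ₁) (radG θ₂); simp only [radG]; omega)
          (hsep i j hi hj)
      simp only [SatG]
      rw [hsem₁ G C v h₁, hsem₂ G C v h₂]
      constructor
      · rintro (⟨p, hp, h⟩ | ⟨p, hp, h⟩)
        exacts [⟨p, List.mem_append_left _ hp, h⟩, ⟨p, List.mem_append_right _ hp, h⟩]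
      · rintro ⟨p, hp, h⟩
        rcases List.mem_append.mp hp with hm | hm
        exacts [Or.inl ⟨p, hm, h⟩, Or.inr ⟨p, hm, h⟩]
  | @gex m i R θ ih =>
    intro f
    obtain ⟨L', hdep, hsem⟩ := ih (Fin.snoc f (f i))
    have hflast : (Fin.snoc f (f i) : Fin _ → Bool) (Fin.last m) = f i := by
      rw [Fin.snoc_last]
    have hfcast : ∀ j : Fin m, (Fin.snoc f (f i) : Fin _ → Bool) j.castSucc = f j :=
      fun j => by rw [Fin.snoc_castSucc]
    cases hfi : f i
    · -- the guard variable is in the "false" cluster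
      refine ⟨L'.map fun p => (.gex i R p.1, rename (rhoShr i) p.2), ?_, ?_⟩
      · rintro q hq
        obtain ⟨p, hp, rfl⟩ := List.mem_map.mp hq
        obtain ⟨hd1, hd2⟩ := hdep p hp
        constructor
        · -- gex i R p.1 depends only on false coords
          intro V G C v v' hvv
          simp only [SatG]
          refine exists_congr fun w => and_congr ?_ ?_
          · rw [hvv i hfi]
          · refine hd1 G C _ _ ?_
            intro a ha
            rcases Fin.eq_castSucc_or_eq_last a with ⟨a', rfl⟩ | rfl
            · rw [Fin.snoc_castSucc, Fin.snoc_castSucc]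
              exact hvv a' (by simp only [Set.mem_setOf_eq] at ha ⊢; rwa [hfcast a'] at ha)
            · rw [Fin.snoc_last, Fin.snoc_last]
        · -- rename (rhoShr i) p.2 depends only on true coords
          intro V G C v v' hvv
          rw [satG_rename, satG_rename, comp_rhoShr, comp_rhoShr]
          refine hd2 G C _ _ ?_
          intro a ha
          rcases Fin.eq_castSucc_or_eq_last a with ⟨a', rfl⟩ | rfl
          · rw [Fin.snoc_castSucc, Fin.snoc_castSucc]
            exact hvv a' (by simp only [Set.mem_setOf_eq] at ha ⊢; rwa [hfcast a'] at ha)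
          · simp only [Set.mem_setOf_eq] at ha
            rw [hflast, hfi] at ha
            simp at ha
      · intro V G C v hsep
        have hsep' : ∀ w, Near G R (v i) w → ∀ a b : Fin (m + 1),
            (Fin.snoc f (f i) : Fin _ → Bool) a = false →
            (Fin.snoc f (f i) : Fin _ → Bool) b = true →
            ¬ Near G (2 * radG θ + 1) ((Fin.snoc v w : Fin _ → _) a)
              ((Fin.snoc v w : Fin _ → _) b) := by
          intro w hw a b ha hb
          rcases Fin.eq_castSucc_or_eq_last b with ⟨b', rfl⟩ | rfl
          · rw [hfcast] at hb
            rcases Fin.eq_castSucc_or_eq_last a with ⟨a', rfl⟩ | rfl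
            · rw [hfcast] at ha
              rw [Fin.snoc_castSucc, Fin.snoc_castSucc]
              exact not_near_mono (by simp only [radG]; omega) (hsep a' b' ha hb)
            · rw [Fin.snoc_last, Fin.snoc_castSucc]
              intro hc
              exact hsep i b' hfi hb (by
                have := hw.trans hc
                exact this.mono (by simp only [radG]; omega))
          · rw [hflast, hfi] at hb; exact absurd hb (by simp)
        simp only [SatG]
        constructor
        · rintro ⟨w, hw, hs⟩
          rw [hsem G C (Fin.snoc v w) (hsep' w hw)] at hs
          obtain ⟨p, hp, h1, h2⟩ := hs
          refine ⟨(.gex i R p.1, rename (rhoShr i) p.2), List.mem_map_of_mem hp, ⟨w, hw, h1⟩, ?_⟩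
          rw [satG_rename, comp_rhoShr]
          refine ((hdep p hp).2 G C _ _ ?_).mp h2
          intro a ha
          rcases Fin.eq_castSucc_or_eq_last a with ⟨a', rfl⟩ | rfl
          · rw [Fin.snoc_castSucc, Fin.snoc_castSucc]
          · simp only [Set.mem_setOf_eq] at ha
            rw [hflast, hfi] at ha
            simp at ha
        · rintro ⟨q, hq, h1, h2⟩
          obtain ⟨p, hp, rfl⟩ := List.mem_map.mp hq
          simp only [SatG] at h1
          obtain ⟨w, hw, h1⟩ := h1
          refine ⟨w, hw, ?_⟩
          rw [hsem G C (Fin.snoc v w) (hsep' w hw)]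
          refine ⟨p, hp, h1, ?_⟩
          rw [satG_rename, comp_rhoShr] at h2
          refine ((hdep p hp).2 G C _ _ ?_).mp h2
          intro a ha
          rcases Fin.eq_castSucc_or_eq_last a with ⟨a', rfl⟩ | rfl
          · rw [Fin.snoc_castSucc, Fin.snoc_castSucc]
          · simp only [Set.mem_setOf_eq] at ha
            rw [hflast, hfi] at ha
            simp at ha
    · -- the guard variable is in the "true" cluster
      refine ⟨L'.map fun p => (rename (rhoShr i) p.1, .gex i R p.2), ?_, ?_⟩
      · rintro q hq
        obtain ⟨p, hp, rfl⟩ := List.mem_map.mp hq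
        obtain ⟨hd1, hd2⟩ := hdep p hp
        constructor
        · intro V G C v v' hvv
          rw [satG_rename, satG_rename, comp_rhoShr, comp_rhoShr]
          refine hd1 G C _ _ ?_
          intro a ha
          rcases Fin.eq_castSucc_or_eq_last a with ⟨a', rfl⟩ | rfl
          · rw [Fin.snoc_castSucc, Fin.snoc_castSucc]
            exact hvv a' (by simp only [Set.mem_setOf_eq] at ha ⊢; rwa [hfcast a'] at ha)
          · simp only [Set.mem_setOf_eq] at ha
            rw [hflast, hfi] at ha
            simp at ha
        · intro V G C v v' hvv
          simp only [SatG]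
          refine exists_congr fun w => and_congr ?_ ?_
          · rw [hvv i hfi]
          · refine hd2 G C _ _ ?_
            intro a ha
            rcases Fin.eq_castSucc_or_eq_last a with ⟨a', rfl⟩ | rfl
            · rw [Fin.snoc_castSucc, Fin.snoc_castSucc]
              exact hvv a' (by simp only [Set.mem_setOf_eq] at ha ⊢; rwa [hfcast a'] at ha)
            · rw [Fin.snoc_last, Fin.snoc_last]
      · intro V G C v hsep
        have hsep' : ∀ w, Near G R (v i) w → ∀ a b : Fin (m + 1),
            (Fin.snoc f (f i) : Fin _ → Bool) a = false →
            (Fin.snoc f (f i) : Fin _ → Bool) b = true →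
            ¬ Near G (2 * radG θ + 1) ((Fin.snoc v w : Fin _ → _) a)
              ((Fin.snoc v w : Fin _ → _) b) := by
          intro w hw a b ha hb
          rcases Fin.eq_castSucc_or_eq_last a with ⟨a', rfl⟩ | rfl
          · rw [hfcast] at ha
            rcases Fin.eq_castSucc_or_eq_last b with ⟨b', rfl⟩ | rfl
            · rw [hfcast] at hb
              rw [Fin.snoc_castSucc, Fin.snoc_castSucc]
              exact not_near_mono (by simp only [radG]; omega) (hsep a' b' ha hb)
            · rw [Fin.snoc_last, Fin.snoc_castSucc]
              intro hc
              exact hsep a' i ha hfi (by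
                have := hc.trans (hw.symm)
                exact this.mono (by simp only [radG]; omega))
          · rw [hflast, hfi] at ha; exact absurd ha (by simp)
        simp only [SatG]
        constructor
        · rintro ⟨w, hw, hs⟩
          rw [hsem G C (Fin.snoc v w) (hsep' w hw)] at hs
          obtain ⟨p, hp, h1, h2⟩ := hs
          refine ⟨(rename (rhoShr i) p.1, .gex i R p.2), List.mem_map_of_mem hp, ?_, ⟨w, hw, h2⟩⟩
          rw [satG_rename, comp_rhoShr]
          refine ((hdep p hp).1 G C _ _ ?_).mp h1
          intro a ha
          rcases Fin.eq_castSucc_or_eq_last a with ⟨a', rfl⟩ | rfl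
          · rw [Fin.snoc_castSucc, Fin.snoc_castSucc]
          · simp only [Set.mem_setOf_eq] at ha
            rw [hflast, hfi] at ha
            simp at ha
        · rintro ⟨q, hq, h1, h2⟩
          obtain ⟨p, hp, rfl⟩ := List.mem_map.mp hq
          simp only [SatG] at h2
          obtain ⟨w, hw, h2⟩ := h2
          refine ⟨w, hw, ?_⟩
          rw [hsem G C (Fin.snoc v w) (hsep' w hw)]
          refine ⟨p, hp, ?_, h2⟩
          rw [satG_rename, comp_rhoShr] at h1
          refine ((hdep p hp).1 G C _ _ ?_).mp h1
          intro a ha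
          rcases Fin.eq_castSucc_or_eq_last a with ⟨a', rfl⟩ | rfl
          · rw [Fin.snoc_castSucc, Fin.snoc_castSucc]
          · simp only [Set.mem_setOf_eq] at ha
            rw [hflast, hfi] at ha
            simp at ha



/-- The "far witness" lemma: the existence of a witness in `B` far from all the
`v j` can be detected by suitably chosen unary predicates and local conditions. -/
lemma far_witness {V : Type} [Finite V] (G : SimpleGraph V) (s m : ℕ) (hm : 0 < m)
    (B : Set V) :
    ∃ (Gd : Set V) (D Nn : Fin m → Set V),
      ∀ v : Fin m → V,
        ((∃ w ∈ B, ∀ j, ¬ Near G s (v j) w) ↔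
          (v ⟨0, hm⟩ ∈ Gd ∨
            (∃ i : Fin m, v ⟨0, hm⟩ ∈ Nn i ∧
              ∀ j, ¬ ∃ w, Near G (3 * s) (v j) w ∧ w ∈ D i) ∨
            (∃ j, ∃ w, Near G (5 * s) (v j) w ∧
              (w ∈ B ∧ ∀ j', ¬ Near G s (v j') w)))) := by
  classical
  have : Fintype V := Fintype.ofFinite V
  set Scat : Finset V → Prop :=
    fun S => (↑S : Set V) ⊆ B ∧
      ∀ x ∈ S, ∀ y ∈ S, x ≠ y → ¬ Near G (2 * s) x y with hScat
  have hne : (Finset.univ.powerset.filter Scat).Nonempty := by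
    refine ⟨∅, ?_⟩
    simp [Scat]
  obtain ⟨S₀, hS₀mem, hS₀max⟩ :=
    Finset.exists_max_image (Finset.univ.powerset.filter Scat) Finset.card hne
  have hS₀scat : Scat S₀ := (Finset.mem_filter.mp hS₀mem).2
  by_cases hgood : m + 1 ≤ S₀.card
  · -- good case: there are always far witnesses
    refine ⟨Set.univ, fun _ => ∅, fun _ => ∅, ?_⟩
    intro v
    simp only [Set.mem_univ, true_or, iff_true]
    by_contra hcon
    push_neg at hcon
    have hmap : ∀ x, x ∈ S₀ → ∃ j : Fin m, Near G s (v j) x := by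
      intro x hx
      exact hcon x (hS₀scat.1 hx)
    choose φ hφ using hmap
    have := Finset.exists_ne_map_eq_of_card_lt_of_maps_to
      (f := fun x => if h : x ∈ S₀ then φ x h else ⟨0, hm⟩)
      (t := (Finset.univ : Finset (Fin m))) (s := S₀)
      (by simpa using hgood) (fun a _ => Finset.mem_univ _)
    obtain ⟨x, hx, y, hy, hxy, hfeq⟩ := this
    simp only [dif_pos hx, dif_pos hy] at hfeq
    have hnear : Near G (2 * s) x y := by
      have h1 := (hφ x hx).symm
      have h2 := hfeq ▸ hφ y hy
      have := h1.trans h2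
      exact this.mono (by omega)
    exact hS₀scat.2 x hx y hy hxy hnear
  · -- bad case: bounded scattered sets; use centers
    push_neg at hgood
    have hcard : S₀.card ≤ m := by omega
    have hcover : ∀ w ∈ B, ∃ c ∈ S₀, Near G (2 * s) c w := by
      intro w hw
      by_contra hcov
      push_neg at hcov
      have hwS₀ : w ∉ S₀ := fun hmem => (hcov w hmem) (Near.refl _ w)
      have hscat' : Scat (insert w S₀) := by
        constructor
        · intro x hx
          rcases Finset.mem_insert.mp hx with rfl | hx
          · exact hw
          · exact hS₀scat.1 hx
        · intro x hx y hy hxy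
          rcases Finset.mem_insert.mp hx with hxw | hx'
          · rcases Finset.mem_insert.mp hy with hyw | hy'
            · exact absurd (hxw.trans hyw.symm) hxy
            · subst hxw; exact fun hc => (hcov y hy') hc.symm
          · rcases Finset.mem_insert.mp hy with hyw | hy'
            · subst hyw; exact hcov x hx'
            · exact hS₀scat.2 x hx' y hy' hxy
      have hmem' : insert w S₀ ∈ Finset.univ.powerset.filter Scat :=
        Finset.mem_filter.mpr ⟨Finset.mem_powerset.mpr (Finset.subset_univ _), hscat'⟩
      have := hS₀max _ hmem'
      rw [Finset.card_insert_of_notMem hwS₀] at this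
      omega
    set l : List V := S₀.toList with hl
    have hlen : l.length ≤ m := by
      rw [hl, Finset.length_toList]; exact hcard
    refine ⟨∅,
      fun i => {x | ∃ h : (i : ℕ) < l.length, x = l.get ⟨i, h⟩},
      fun i => {_x | (i : ℕ) < l.length}, ?_⟩
    intro v
    constructor
    · rintro ⟨w, hwB, hwfar⟩
      obtain ⟨c, hc, hcw⟩ := hcover w hwB
      obtain ⟨n, hn⟩ := List.mem_iff_get.mp ((Finset.mem_toList).mpr hc)
      have hnl : (n : ℕ) < l.length := by rw [hl]; exact n.2
      by_cases hnear3 : ∀ j, ¬ Near G (3 * s) (v j) c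
      · refine Or.inr (Or.inl ⟨⟨(n : ℕ), lt_of_lt_of_le hnl hlen⟩, hnl, ?_⟩)
        intro j
        rintro ⟨w', hw', hw'mem⟩
        obtain ⟨hlt, rfl⟩ := hw'mem
        refine hnear3 j ?_
        have : l.get ⟨(n : ℕ), hlt⟩ = c := by
          rw [← hn]
        rw [this] at hw'
        exact hw'
      · push_neg at hnear3
        obtain ⟨j, hj⟩ := hnear3
        refine Or.inr (Or.inr ⟨j, w, ?_, hwB, hwfar⟩)
        have := hj.trans hcw
        exact this.mono (by omega)
    · rintro (hGd | ⟨i, hNn, hD⟩ | ⟨j, w, _, hwB, hwfar⟩)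
      · exact absurd hGd (Set.notMem_empty _)
      · have hi : (i : ℕ) < l.length := hNn
        refine ⟨l.get ⟨i, hi⟩, ?_, ?_⟩
        · refine hS₀scat.1 ?_
          have hmem : l.get ⟨i, hi⟩ ∈ S₀ := by
            rw [← Finset.mem_toList, ← hl]
            exact List.get_mem _ _
          exact hmem
        · intro j hnear
          exact hD j ⟨l.get ⟨i, hi⟩, hnear.mono (by omega), hi, rfl⟩
      · exact ⟨w, hwB, hwfar⟩



lemma elim_comp_map_inl {α β γ δ : Type} (f : α → Set δ) (g : β → Set δ) (h : γ → Set δ) :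
    (Sum.elim f (Sum.elim g h)) ∘ (Sum.map id Sum.inl : α ⊕ β → α ⊕ (β ⊕ γ)) = Sum.elim f g := by
  funext x; cases x <;> rfl

lemma elim_comp_map_inr {α β γ δ : Type} (f : α → Set δ) (g : β → Set δ) (h : γ → Set δ) :
    (Sum.elim f (Sum.elim g h)) ∘ (Sum.map id Sum.inr : α ⊕ γ → α ⊕ (β ⊕ γ)) = Sum.elim f h := by
  funext x; cases x <;> rfl

lemma exists_mem_finRange_map {α : Type} {n : ℕ} (f : Fin n → α) (P : α → Prop) :
    (∃ θ ∈ (List.finRange n).map f, P θ) ↔ ∃ j, P (f j) := by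
  constructor
  · rintro ⟨θ, hθ, hP⟩
    obtain ⟨j, _, rfl⟩ := List.mem_map.mp hθ
    exact ⟨j, hP⟩
  · rintro ⟨j, hP⟩
    exact ⟨f j, List.mem_map_of_mem (List.mem_finRange j), hP⟩

lemma exists_mem_list {α : Type} (L : List α) (P : α → Prop) :
    (∃ p ∈ L, P p) ↔ ∃ k : Fin L.length, P (L.get k) := by
  constructor
  · rintro ⟨p, hp, hP⟩
    obtain ⟨k, rfl⟩ := List.mem_iff_get.mp hp
    exact ⟨k, hP⟩
  · rintro ⟨k, hP⟩
    exact ⟨L.get k, L.get_mem _, hP⟩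

/-- The main lemma: every first-order formula is equivalent, over every colored
graph expanded by suitably chosen additional unary predicates, to a guarded
(hence local) formula. -/
theorem main_guarded {c : ℕ} : ∀ {m : ℕ} (φ : Fml c m), 0 < m →
    ∃ (κ : Type) (_ : Fintype κ) (ψ : GFml (Fin c ⊕ κ) m),
      ∀ (A : CGraph c), ∃ ext : κ → Set A.V,
        ∀ v : Fin m → A.V,
          Fml.Sat A φ v ↔ SatG A.G (Sum.elim A.color ext) ψ v := by
  intro m φ
  induction φ with
  | @eq m i j =>
    intro hm
    exact ⟨Fin 0, inferInstance, .eq i j, fun A => ⟨Fin.elim0, fun v => Iff.rfl⟩⟩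
  | @adj m i j =>
    intro hm
    exact ⟨Fin 0, inferInstance, .adj i j, fun A => ⟨Fin.elim0, fun v => Iff.rfl⟩⟩
  | @col m k i =>
    intro hm
    exact ⟨Fin 0, inferInstance, .col (Sum.inl k) i, fun A => ⟨Fin.elim0, fun v => Iff.rfl⟩⟩
  | @not m φ₀ ih =>
    intro hm
    obtain ⟨κ, hκ, ψ, hψ⟩ := ih hm
    refine ⟨κ, hκ, .not ψ, fun A => ?_⟩
    obtain ⟨ext, hext⟩ := hψ A
    exact ⟨ext, fun v => by simp only [Fml.Sat, SatG]; rw [hext v]⟩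
  | @or m φ₁ φ₂ ih₁ ih₂ =>
    intro hm
    obtain ⟨κ₁, hκ₁, ψ₁, hψ₁⟩ := ih₁ hm
    obtain ⟨κ₂, hκ₂, ψ₂, hψ₂⟩ := ih₂ hm
    refine ⟨κ₁ ⊕ κ₂, @instFintypeSum _ _ hκ₁ hκ₂,
      .or (crename (Sum.map id Sum.inl) ψ₁) (crename (Sum.map id Sum.inr) ψ₂), fun A => ?_⟩
    obtain ⟨ext₁, hext₁⟩ := hψ₁ A
    obtain ⟨ext₂, hext₂⟩ := hψ₂ A
    refine ⟨Sum.elim ext₁ ext₂, fun v => ?_⟩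
    simp only [Fml.Sat, SatG]
    rw [satG_crename, satG_crename, elim_comp_map_inl, elim_comp_map_inr,
      hext₁ v, hext₂ v]
  | @ex m φ₀ ih =>
    intro hm
    obtain ⟨κ₁, hκ₁, ψ₁, hψ₁⟩ := ih (Nat.succ_pos m)
    obtain ⟨L, hLdep, hLsem⟩ := split ψ₁ (Fin.snoc (fun _ => false) true)
    -- abbreviations
    let s : ℕ := 2 * radG ψ₁ + 1
    let K : ℕ := L.length
    let κ₂ : Type := Fin K ⊕ ((Fin K × Fin m) ⊕ ((Fin K × Fin m) ⊕ Fin K))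
    let τ : Type := Fin c ⊕ (κ₁ ⊕ κ₂)
    let colG : Fin K → τ := fun k => Sum.inr (Sum.inr (Sum.inl k))
    let colD : Fin K → Fin m → τ := fun k i => Sum.inr (Sum.inr (Sum.inr (Sum.inl (k, i))))
    let colN : Fin K → Fin m → τ :=
      fun k i => Sum.inr (Sum.inr (Sum.inr (Sum.inr (Sum.inl (k, i)))))
    let colB : Fin K → τ := fun k => Sum.inr (Sum.inr (Sum.inr (Sum.inr (Sum.inr k))))
    let emb : (Fin c ⊕ κ₁) → τ := Sum.map id Sum.inl
    let ψ₁' : GFml τ (m + 1) := crename emb ψ₁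
    let x₀ : Fin m := ⟨0, hm⟩
    let ψnear : GFml τ m := bigOr ((List.finRange m).map fun j => .gex j s ψ₁')
    let αf : Fin K → GFml τ m := fun k => rename (rhoShr x₀) (crename emb (L.get k).1)
    let farCtr : Fin K → GFml τ m := fun k =>
      bigOr ((List.finRange m).map fun i =>
        gand (.col (colN k i) x₀)
          (bigAnd ((List.finRange m).map fun j =>
            .not (.gex j (3 * s) (.col (colD k i) (Fin.last m))))))
    let farNear : Fin K → GFml τ m := fun k =>
      bigOr ((List.finRange m).map fun j =>
        .gex j (5 * s) (gand (.col (colB k) (Fin.last m))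
          (bigAnd ((List.finRange m).map fun j' =>
            .not (nearG s j'.castSucc (Fin.last m))))))
    let ψfar : GFml τ m := bigOr ((List.finRange K).map fun k =>
      gand (αf k) (.or (.col (colG k) x₀) (.or (farCtr k) (farNear k))))
    letI : Fintype κ₁ := hκ₁
    refine ⟨κ₁ ⊕ κ₂, inferInstance, .or ψnear ψfar, fun A => ?_⟩
    obtain ⟨ext₁, hext₁⟩ := hψ₁ A
    let C₁ : (Fin c ⊕ κ₁) → Set A.V := Sum.elim A.color ext₁
    let Bset : Fin K → Set A.V := fun k => {w | SatG A.G C₁ (L.get k).2 (fun _ => w)}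
    have hfw0 := fun k : Fin K => far_witness A.G s m hm (Bset k)
    choose Gd Dd Nn hfw using hfw0
    let ext₂ : κ₂ → Set A.V := Sum.elim Gd (Sum.elim (fun ki => Dd ki.1 ki.2)
        (Sum.elim (fun ki => Nn ki.1 ki.2) Bset))
    refine ⟨Sum.elim ext₁ ext₂, fun v => ?_⟩
    set C : τ → Set A.V := Sum.elim A.color (Sum.elim ext₁ ext₂) with hC
    have hCemb : C ∘ emb = C₁ := by funext x; cases x <;> rfl
    have hψ₁'sat : ∀ u : Fin (m + 1) → A.V, SatG A.G C ψ₁' u ↔ SatG A.G C₁ ψ₁ u := by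
      intro u
      show SatG A.G C (crename emb ψ₁) u ↔ _
      rw [satG_crename, hCemb]
    -- the two intermediate propositions
    have hnear_iff : SatG A.G C ψnear v ↔
        ∃ j : Fin m, ∃ w, Near A.G s (v j) w ∧ SatG A.G C₁ ψ₁ (Fin.snoc v w) := by
      show SatG A.G C (bigOr _) v ↔ _
      rw [satG_bigOr, exists_mem_finRange_map]
      refine exists_congr fun j => ?_
      show (∃ w, _ ∧ _) ↔ _
      exact exists_congr fun w => and_congr Iff.rfl (hψ₁'sat _)
    have hαf_iff : ∀ k : Fin K, SatG A.G C (αf k) v ↔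
        SatG A.G C₁ (L.get k).1 (Fin.snoc v (v x₀)) := by
      intro k
      show SatG A.G C (rename (rhoShr x₀) (crename emb (L.get k).1)) v ↔ _
      rw [satG_rename, satG_crename, hCemb, comp_rhoShr]
    have hfarCtr_iff : ∀ k : Fin K, SatG A.G C (farCtr k) v ↔
        ∃ i : Fin m, v x₀ ∈ Nn k i ∧
          ∀ j, ¬ ∃ w, Near A.G (3 * s) (v j) w ∧ w ∈ Dd k i := by
      intro k
      show SatG A.G C (bigOr _) v ↔ _
      rw [satG_bigOr, exists_mem_finRange_map]
      refine exists_congr fun i => ?_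
      rw [satG_gand]
      refine and_congr Iff.rfl ?_
      rw [satG_bigAnd]
      constructor
      · intro h j
        have := h _ (List.mem_map_of_mem (List.mem_finRange j))
        simp only [SatG] at this
        rintro ⟨w, hw, hwD⟩
        exact this ⟨w, hw, by rwa [Fin.snoc_last]⟩
      · intro h θ hθ
        obtain ⟨j, _, rfl⟩ := List.mem_map.mp hθ
        simp only [SatG]
        rintro ⟨w, hw, hwD⟩
        rw [Fin.snoc_last] at hwD
        exact h j ⟨w, hw, hwD⟩
    have hfarNear_iff : ∀ k : Fin K, SatG A.G C (farNear k) v ↔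
        ∃ j, ∃ w, Near A.G (5 * s) (v j) w ∧
          (w ∈ Bset k ∧ ∀ j', ¬ Near A.G s (v j') w) := by
      intro k
      show SatG A.G C (bigOr _) v ↔ _
      rw [satG_bigOr, exists_mem_finRange_map]
      refine exists_congr fun j => ?_
      show (∃ w, _ ∧ _) ↔ _
      refine exists_congr fun w => and_congr Iff.rfl ?_
      rw [satG_gand]
      refine and_congr ?_ ?_
      · show (Fin.snoc v w : Fin _ → _) (Fin.last m) ∈ C (colB k) ↔ w ∈ Bset k
        rw [Fin.snoc_last]
        rfl
      · rw [satG_bigAnd]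
        constructor
        · intro h j'
          have h1 : ¬ SatG A.G C (nearG s j'.castSucc (Fin.last m)) (Fin.snoc v w) :=
            h _ (List.mem_map_of_mem (List.mem_finRange j'))
          rw [satG_nearG, Fin.snoc_castSucc, Fin.snoc_last] at h1
          exact h1
        · intro h θ hθ
          obtain ⟨j', _, rfl⟩ := List.mem_map.mp hθ
          show ¬ SatG A.G C (nearG s j'.castSucc (Fin.last m)) (Fin.snoc v w)
          rw [satG_nearG, Fin.snoc_castSucc, Fin.snoc_last]
          exact h j'
    have hfar_iff : SatG A.G C ψfar v ↔
        ∃ k : Fin K, SatG A.G C₁ (L.get k).1 (Fin.snoc v (v x₀)) ∧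
          (v x₀ ∈ Gd k ∨
            (∃ i, v x₀ ∈ Nn k i ∧ ∀ j, ¬ ∃ w, Near A.G (3 * s) (v j) w ∧ w ∈ Dd k i) ∨
            (∃ j, ∃ w, Near A.G (5 * s) (v j) w ∧
              (w ∈ Bset k ∧ ∀ j', ¬ Near A.G s (v j') w))) := by
      show SatG A.G C (bigOr _) v ↔ _
      rw [satG_bigOr, exists_mem_finRange_map]
      refine exists_congr fun k => ?_
      rw [satG_gand]
      refine and_congr (hαf_iff k) ?_
      show (SatG A.G C (.col (colG k) x₀) v ∨ _) ↔ _
      refine or_congr Iff.rfl ?_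
      show (SatG A.G C (farCtr k) v ∨ SatG A.G C (farNear k) v) ↔ _
      exact or_congr (hfarCtr_iff k) (hfarNear_iff k)
    -- separation for far witnesses
    have hsep : ∀ w, (∀ j, ¬ Near A.G s (v j) w) →
        ∀ a b : Fin (m + 1),
          (Fin.snoc (fun _ => false) true : Fin (m + 1) → Bool) a = false →
          (Fin.snoc (fun _ => false) true : Fin (m + 1) → Bool) b = true →
          ¬ Near A.G (2 * radG ψ₁ + 1) ((Fin.snoc v w : Fin _ → _) a)
            ((Fin.snoc v w : Fin _ → _) b) := by
      intro w hw a b ha hb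
      rcases Fin.eq_castSucc_or_eq_last b with ⟨b', rfl⟩ | rfl
      · rw [Fin.snoc_castSucc] at hb ⊢
        simp at hb
      · rcases Fin.eq_castSucc_or_eq_last a with ⟨a', rfl⟩ | rfl
        · rw [Fin.snoc_castSucc, Fin.snoc_last]
          exact hw a'
        · rw [Fin.snoc_last] at ha
          simp at ha
    -- main equivalence
    simp only [Fml.Sat, SatG]
    rw [hnear_iff, hfar_iff]
    constructor
    · rintro ⟨w, hw⟩
      rw [hext₁] at hw
      by_cases hfar : ∀ j, ¬ Near A.G s (v j) w
      · -- far witness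
        right
        rw [hLsem A.G C₁ (Fin.snoc v w) (hsep w hfar)] at hw
        rw [exists_mem_list] at hw
        obtain ⟨k, h1, h2⟩ := hw
        refine ⟨k, ?_, ?_⟩
        · refine ((hLdep _ (L.get_mem _)).1 A.G C₁ _ _ ?_).mp h1
          intro a ha
          rcases Fin.eq_castSucc_or_eq_last a with ⟨a', rfl⟩ | rfl
          · rw [Fin.snoc_castSucc, Fin.snoc_castSucc]
          · simp only [Set.mem_setOf_eq, Fin.snoc_last] at ha
            simp at ha
        · refine (hfw k v).mp ⟨w, ?_, hfar⟩
          show SatG A.G C₁ (L.get k).2 (fun _ => w)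
          refine ((hLdep _ (L.get_mem _)).2 A.G C₁ _ _ ?_).mp h2
          intro a ha
          rcases Fin.eq_castSucc_or_eq_last a with ⟨a', rfl⟩ | rfl
          · simp only [Set.mem_setOf_eq, Fin.snoc_castSucc] at ha
            simp at ha
          · rw [Fin.snoc_last]
      · -- near witness
        left
        push_neg at hfar
        obtain ⟨j, hj⟩ := hfar
        exact ⟨j, w, hj, hw⟩
    · rintro (⟨j, w, _, hw⟩ | ⟨k, h1, h2⟩)
      · exact ⟨w, (hext₁ _).mpr hw⟩
      · obtain ⟨w, hwB, hwfar⟩ := (hfw k v).mpr h2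
        refine ⟨w, (hext₁ _).mpr ?_⟩
        rw [hLsem A.G C₁ (Fin.snoc v w) (hsep w hwfar)]
        refine ⟨L.get k, L.get_mem _, ?_, ?_⟩
        · refine ((hLdep _ (L.get_mem _)).1 A.G C₁ _ _ ?_).mp h1
          intro a ha
          rcases Fin.eq_castSucc_or_eq_last a with ⟨a', rfl⟩ | rfl
          · rw [Fin.snoc_castSucc, Fin.snoc_castSucc]
          · simp only [Set.mem_setOf_eq, Fin.snoc_last] at ha
            simp at ha
        · refine ((hLdep _ (L.get_mem _)).2 A.G C₁ _ _ ?_).mp hwB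
          intro a ha
          rcases Fin.eq_castSucc_or_eq_last a with ⟨a', rfl⟩ | rfl
          · simp only [Set.mem_setOf_eq, Fin.snoc_castSucc] at ha
            simp at ha
          · rw [Fin.snoc_last]



/-- Conjunction of first-order formulas. -/
def fand {c m : ℕ} (a b : Fml c m) : Fml c m := .not (.or (.not a) (.not b))

lemma sat_fand {c : ℕ} (A : CGraph c) {m} (a b : Fml c m) (v : Fin m → A.V) :
    Fml.Sat A (fand a b) v ↔ Fml.Sat A a v ∧ Fml.Sat A b v := by
  simp [fand, Fml.Sat]

/-- A first-order formula expressing that `v a` and `v b` are within distance `R`. -/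
def distF (c' : ℕ) : (R : ℕ) → {m : ℕ} → Fin m → Fin m → Fml c' m
  | 0, _, a, b => .eq a b
  | R + 1, m, a, b =>
      .or (distF c' R a b)
        (.ex (fand (.adj a.castSucc (Fin.last m)) (distF c' R (Fin.last m) b.castSucc)))

lemma sat_distF {c' : ℕ} (A : CGraph c') :
    ∀ (R : ℕ) {m : ℕ} (a b : Fin m) (v : Fin m → A.V),
      Fml.Sat A (distF c' R a b) v ↔ Near A.G R (v a) (v b) := by
  intro R
  induction R with
  | zero =>
    intro m a b v
    simpa [distF, Fml.Sat] using near_zero_iff.symm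
  | succ R ih =>
    intro m a b v
    rw [near_succ_iff]
    show (Fml.Sat A (distF c' R a b) v ∨ ∃ w, Fml.Sat A (fand _ _) (Fin.snoc v w)) ↔ _
    rw [ih]
    refine or_congr Iff.rfl (exists_congr fun w => ?_)
    rw [sat_fand]
    show (A.G.Adj ((Fin.snoc v w : Fin _ → _) a.castSucc) ((Fin.snoc v w : Fin _ → _) (Fin.last m)) ∧
      Fml.Sat A (distF c' R (Fin.last m) b.castSucc) (Fin.snoc v w)) ↔ _
    rw [ih]
    simp only [Fin.snoc_castSucc, Fin.snoc_last]

/-- Compilation of a guarded formula to a first-order formula. -/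
def toFml {κ : Type} {c' : ℕ} (e : κ → Fin c') : {m : ℕ} → GFml κ m → Fml c' m
  | m, .fls => .ex (.not (.eq (Fin.last m) (Fin.last m)))
  | _, .eq i j => .eq i j
  | _, .adj i j => .adj i j
  | _, .col k i => .col (e k) i
  | _, .not θ => .not (toFml e θ)
  | _, .or θ₁ θ₂ => .or (toFml e θ₁) (toFml e θ₂)
  | m, .gex i R θ => .ex (fand (distF c' R i.castSucc (Fin.last m)) (toFml e θ))

lemma sat_toFml {κ : Type} {c' : ℕ} (e : κ → Fin c') (A : CGraph c') :
    ∀ {m : ℕ} (θ : GFml κ m) (v : Fin m → A.V),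
      Fml.Sat A (toFml e θ) v ↔ SatG A.G (A.color ∘ e) θ v
  | _, .fls, v => by
      simp [toFml, Fml.Sat, SatG]
  | _, .eq i j, v => Iff.rfl
  | _, .adj i j, v => Iff.rfl
  | _, .col k i, v => Iff.rfl
  | _, .not θ, v => by
      simp only [toFml, Fml.Sat, SatG]
      rw [sat_toFml e A θ v]
  | _, .or θ₁ θ₂, v => by
      simp only [toFml, Fml.Sat, SatG]
      rw [sat_toFml e A θ₁ v, sat_toFml e A θ₂ v]
  | _, .gex i R θ, v => by
      show (∃ w, Fml.Sat A (fand _ _) (Fin.snoc v w)) ↔ _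
      refine exists_congr fun w => ?_
      rw [sat_fand, sat_distF, sat_toFml e A θ (Fin.snoc v w)]
      simp only [Fin.snoc_castSucc, Fin.snoc_last]

/-- Compiled guarded formulas are local. -/
lemma isLocal_toFml {κ : Type} {c' : ℕ} (e : κ → Fin c') (θ : GFml κ 2) {r : ℕ}
    (hrad : radG θ ≤ r) : IsLocalFml r (toFml e θ) := by
  intro A v
  rw [sat_toFml]
  have hv : ∀ i, v i ∈ ballSet A.G r (Set.range v) :=
    fun i => mem_ballSet_self A.G r (Set.mem_range_self i)
  have := satG_induce θ A.G (A.color ∘ e) (ballSet A.G r (Set.range v)) v hv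
    (ballSet_mono_r hrad)
  rw [this]
  exact (sat_toFml e (A.induce (ballSet A.G r (Set.range v))) θ (fun i => ⟨v i, hv i⟩)).symm


end LocGaif

namespace LocGaif

open SimpleGraph

lemma comp_sw {α : Type} (u v : α) :
    (![u, v] : Fin 2 → α) ∘ (![1, 0] : Fin 2 → Fin 2) = ![v, u] := by
  funext i; fin_cases i <;> rfl

/-- Packing of the color indices. -/
def embE (c N : ℕ) {κ : Type} (eκ : κ ≃ Fin N) : (Fin c ⊕ κ) → Fin (c + N + 1) :=
  Sum.elim (fun i => Fin.castAdd 1 (Fin.castAdd N i))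
    (fun k => Fin.castAdd 1 (Fin.natAdd c (eκ k)))

/-- Packing of the colors. -/
def colorPack {c N : ℕ} {V : Type} (col : Fin c → Set V) (extN : Fin N → Set V)
    (lst : Set V) : Fin (c + N + 1) → Set V :=
  Fin.addCases (Fin.addCases col extN) (fun _ => lst)

lemma colorPack_embE {c N : ℕ} {κ : Type} (eκ : κ ≃ Fin N) {V : Type}
    (col : Fin c → Set V) (ext : κ → Set V) (lst : Set V) :
    (colorPack col (fun j => ext (eκ.symm j)) lst) ∘ (embE c N eκ) = Sum.elim col ext := by
  funext x
  cases x with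
  | inl i =>
    simp only [Function.comp_apply, embE, colorPack, Sum.elim_inl]
    rw [Fin.addCases_left, Fin.addCases_left]
  | inr k =>
    simp only [Function.comp_apply, embE, colorPack, Sum.elim_inr]
    rw [Fin.addCases_left, Fin.addCases_right]
    simp

lemma colorPack_last {c N : ℕ} {V : Type} (col : Fin c → Set V) (extN : Fin N → Set V)
    (lst : Set V) : colorPack col extN lst (Fin.natAdd (c + N) 0) = lst := by
  show Fin.addCases _ _ _ = lst
  rw [Fin.addCases_right]

end LocGaif

open LocGaif in
theorem local_form_for_noncopying_transductions' (T : Transduction) (hT : T.k = 1) :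
    ∃ T' : Transduction, T'.k = 1 ∧
      (∃ M : Fin T'.c, T'.I.ν = Fml.col M 0) ∧
      (∃ r : ℕ, IsLocalFml r T'.I.η) ∧
      Subsumes T' T := by
  classical
  obtain ⟨κ, hκ, ψ, hψ⟩ := main_guarded (c := T.c) T.I.η (by norm_num)
  letI : Fintype κ := hκ
  set N := Fintype.card κ with hN
  set eκ : κ ≃ Fin N := Fintype.equivFin κ with heκ
  set c' : ℕ := T.c + N + 1 with hc'
  let e : (Fin T.c ⊕ κ) → Fin c' := embE T.c N eκ
  let M : Fin c' := Fin.natAdd (T.c + N) 0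
  let sw : Fin 2 → Fin 2 := ![1, 0]
  let ψsym : GFml (Fin T.c ⊕ κ) 2 :=
    gand (.not (.eq 0 1)) (.or ψ (rename sw ψ))
  let η' : Fml c' 2 := toFml e ψsym
  have hsatsym : ∀ (A : CGraph c') (u w : A.V),
      Fml.Sat A η' ![u, w] ↔
        (¬ u = w) ∧ (SatG A.G (A.color ∘ e) ψ ![u, w] ∨ SatG A.G (A.color ∘ e) ψ ![w, u]) := by
    intro A u w
    rw [show η' = toFml e ψsym from rfl, sat_toFml]
    show SatG A.G (A.color ∘ e) (gand _ _) _ ↔ _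
    rw [satG_gand]
    refine and_congr ?_ ?_
    · show (¬ (![u, w] : Fin 2 → A.V) 0 = ![u, w] 1) ↔ _
      simp [Matrix.cons_val_zero, Matrix.cons_val_one]
    · show (SatG _ _ ψ _ ∨ SatG _ _ (rename sw ψ) _) ↔ _
      rw [satG_rename, comp_sw]
  have hsymm : ∀ (A : CGraph c') (u w : A.V),
      Fml.Sat A η' ![u, w] → Fml.Sat A η' ![w, u] := by
    intro A u w h
    rw [hsatsym] at h ⊢
    exact ⟨fun hh => h.1 hh.symm, h.2.symm⟩
  have hirr : ∀ (A : CGraph c') (u : A.V), ¬ Fml.Sat A η' ![u, u] := by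
    intro A u h
    rw [hsatsym] at h
    exact h.1 rfl
  set T' : Transduction := ⟨T.k, T.kpos, c', ⟨Fml.col M 0, η', hsymm, hirr⟩⟩ with hT'def
  refine ⟨T', hT, ⟨M, rfl⟩, ⟨radG ψsym, isLocal_toFml e ψsym le_rfl⟩, ?_⟩
  -- Subsumes
  rintro G H ⟨color₀, ⟨iso⟩⟩
  set A₀ : CGraph T.c := T.copyCGraph G color₀ with hA₀
  obtain ⟨ext, hext⟩ := hψ A₀
  let νset : Set A₀.V := {x | Fml.Sat A₀ T.I.ν ![x]}
  let color' : Fin c' → Set (G.V × Fin T.k) :=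
    colorPack color₀ (fun j => ext (eκ.symm j)) νset
  have hcol : color' ∘ e = Sum.elim A₀.color ext := colorPack_embE eκ color₀ ext νset
  have hM : color' M = νset := colorPack_last color₀ _ νset
  set A' : CGraph c' := T'.copyCGraph G color' with hA'
  have hvert : ∀ x : A₀.V, Fml.Sat A₀ T.I.ν ![x] ↔ Fml.Sat A' (Fml.col M 0) ![x] := by
    intro x
    show Fml.Sat A₀ T.I.ν ![x] ↔ (![x] : Fin 1 → A'.V) 0 ∈ A'.color M
    have : A'.color M = νset := hM
    rw [this]
    exact Iff.rfl
  have hadj : ∀ x y : A₀.V, Fml.Sat A' η' ![x, y] ↔ Fml.Sat A₀ T.I.η ![x, y] := by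
    intro x y
    refine (hsatsym A' x y).trans ?_
    have hcc : A'.color ∘ e = Sum.elim A₀.color ext := hcol
    have hsg : ∀ u : Fin 2 → A₀.V, SatG A'.G (A'.color ∘ e) ψ u ↔ Fml.Sat A₀ T.I.η u := by
      intro u
      rw [hcc]
      exact (hext u).symm
    refine (and_congr Iff.rfl (or_congr (hsg ![x, y]) (hsg ![y, x]))).trans ?_
    constructor
    · rintro ⟨hne, h | h⟩
      · exact h
      · exact T.I.symm A₀ y x h
    · intro h
      refine ⟨fun heq => T.I.irrefl A₀ y (by rwa [heq] at h), Or.inl h⟩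
  refine ⟨color', ⟨iso.trans ⟨Equiv.subtypeEquivRight hvert, ?_⟩⟩⟩
  intro a b
  show Fml.Sat A' η' ![_, _] ↔ Fml.Sat A₀ T.I.η ![_, _]
  exact hadj a.1 b.1

theorem local_form_for_noncopying_transductions (T : Transduction) (hT : T.k = 1) :
    ∃ T' : Transduction, T'.k = 1 ∧
      (∃ M : Fin T'.c, T'.I.ν = Fml.col M 0) ∧
      (∃ r : ℕ, IsLocalFml r T'.I.η) ∧
      Subsumes T' T :=
  local_form_for_noncopying_transductions' T hT
end

section
/- A class of graphs 𝒞 is a first-order transduction of the class ℰ of edgeless graphs if and only if 𝒞 is a perturbation of a class all of whose members have connected components of bounded size. Furthermore, 𝒞 is a non-copying first-order transduction of ℰ if and only if 𝒞 is a perturbation of ℰ. -/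
open SimpleGraph

/-! ### Auxiliary: parity of marks and perturbations -/

@[simp] lemma scompGraph_adj {V : Type} (G : SimpleGraph V) (M : Set V) (u v : V) :
    (scompGraph G M).Adj u v ↔ u ≠ v ∧ (G.Adj u v ↔ ¬(u ∈ M ∧ v ∈ M)) := Iff.rfl

@[simp] lemma copyGraph_adj {V : Type} (G : SimpleGraph V) (k : ℕ) (a b : V × Fin k) :
    (copyGraph G k).Adj a b ↔ (a.1 = b.1 ∧ a.2 ≠ b.2) ∨ (G.Adj a.1 b.1 ∧ a.2 = b.2) := Iff.rfl

/-- Parity (odd number) of marks in the list containing both `u` and `v`. -/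
def POdd {α : Type} : List (Set α) → α → α → Prop
  | [], _, _ => False
  | M :: L, u, v => Xor' (u ∈ M ∧ v ∈ M) (POdd L u v)

lemma POdd_symm {α : Type} (L : List (Set α)) (u v : α) : POdd L u v ↔ POdd L v u := by
  induction L with
  | nil => rfl
  | cons M L ih => unfold POdd; rw [ih]; unfold Xor' Xor; tauto

lemma POdd_append {α : Type} (L₁ L₂ : List (Set α)) (u v : α) :
    POdd (L₁ ++ L₂) u v ↔ Xor' (POdd L₁ u v) (POdd L₂ u v) := by
  induction L₁ with
  | nil => simp [POdd, Xor']
  | cons M L ih =>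
    show Xor' _ (POdd (L ++ L₂) u v) ↔ Xor' (Xor' _ (POdd L u v)) (POdd L₂ u v)
    rw [ih]; unfold Xor' Xor; tauto

lemma perturbGraph_adj {V : Type} (L : List (Set V)) (G : SimpleGraph V) (u v : V) :
    (perturbGraph L G).Adj u v ↔ u ≠ v ∧ Xor' (G.Adj u v) (POdd L u v) := by
  induction L generalizing G with
  | nil =>
    simp only [perturbGraph, POdd]
    constructor
    · intro h; exact ⟨h.ne, Or.inl ⟨h, not_false⟩⟩
    · rintro ⟨hne, h | h⟩
      · exact h.1
      · exact absurd h.1 (by simp)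
  | cons M L ih =>
    show (perturbGraph L (scompGraph G M)).Adj u v ↔ _
    rw [ih]
    simp only [scompGraph_adj, POdd]
    by_cases hne : u = v
    · simp [hne, Xor']
    · simp only [hne, Ne, not_false_iff, true_and]
      unfold Xor' Xor; tauto

lemma perturbGraph_involutive {V : Type} (L : List (Set V)) (G : SimpleGraph V) :
    perturbGraph L (perturbGraph L G) = G := by
  ext u v
  rw [perturbGraph_adj, perturbGraph_adj]
  simp only [Xor', Xor]
  constructor
  · tauto
  · intro h
    have hne : u ≠ v := G.ne_of_adj h
    tauto

/-- Pointwise transfer of parity along a correspondence of marks. -/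
lemma POdd_ofFn_iff {α β : Type} {p : ℕ} (A : Fin p → Set α) (B : Fin p → Set β)
    (u v : α) (x y : β) (h : ∀ i, (u ∈ A i ∧ v ∈ A i) ↔ (x ∈ B i ∧ y ∈ B i)) :
    POdd (List.ofFn A) u v ↔ POdd (List.ofFn B) x y := by
  induction p with
  | zero => simp [POdd]
  | succ n ih =>
    rw [List.ofFn_succ, List.ofFn_succ]
    unfold POdd
    rw [ih (fun i => A i.succ) (fun i => B i.succ) (fun i => h i.succ), h 0]
/-! ### Auxiliary: formula combinators -/

@[simp] lemma Sat_eq {c m : ℕ} (A : CGraph c) (i j : Fin m) (v : Fin m → A.V) :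
    Fml.Sat A (.eq i j) v ↔ v i = v j := Iff.rfl
@[simp] lemma Sat_adj {c m : ℕ} (A : CGraph c) (i j : Fin m) (v : Fin m → A.V) :
    Fml.Sat A (.adj i j) v ↔ A.G.Adj (v i) (v j) := Iff.rfl
@[simp] lemma Sat_col {c m : ℕ} (A : CGraph c) (i : Fin c) (x : Fin m) (v : Fin m → A.V) :
    Fml.Sat A (.col i x) v ↔ v x ∈ A.color i := Iff.rfl
@[simp] lemma Sat_not {c m : ℕ} (A : CGraph c) (φ : Fml c m) (v : Fin m → A.V) :
    Fml.Sat A (.not φ) v ↔ ¬ Fml.Sat A φ v := Iff.rfl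
@[simp] lemma Sat_or {c m : ℕ} (A : CGraph c) (φ ψ : Fml c m) (v : Fin m → A.V) :
    Fml.Sat A (.or φ ψ) v ↔ Fml.Sat A φ v ∨ Fml.Sat A ψ v := Iff.rfl
@[simp] lemma Sat_ex {c m : ℕ} (A : CGraph c) (φ : Fml c (m + 1)) (v : Fin m → A.V) :
    Fml.Sat A (.ex φ) v ↔ ∃ w : A.V, Fml.Sat A φ (Fin.snoc v w) := Iff.rfl

def andF {c m : ℕ} (φ ψ : Fml c m) : Fml c m := .not (.or (.not φ) (.not ψ))

@[simp] lemma Sat_andF {c m : ℕ} (A : CGraph c) (φ ψ : Fml c m) (v : Fin m → A.V) :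
    Fml.Sat A (andF φ ψ) v ↔ Fml.Sat A φ v ∧ Fml.Sat A ψ v := by
  simp [andF]

def xorF {c m : ℕ} (φ ψ : Fml c m) : Fml c m := andF (.or φ ψ) (.not (andF φ ψ))

@[simp] lemma Sat_xorF {c m : ℕ} (A : CGraph c) (φ ψ : Fml c m) (v : Fin m → A.V) :
    Fml.Sat A (xorF φ ψ) v ↔ Xor' (Fml.Sat A φ v) (Fml.Sat A ψ v) := by
  simp [xorF, Xor', Xor]; tauto

def falseF {c m : ℕ} : Fml c (m + 1) := .not (.eq 0 0)

@[simp] lemma Sat_falseF {c m : ℕ} (A : CGraph c) (v : Fin (m + 1) → A.V) :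
    Fml.Sat A (falseF : Fml c (m+1)) v ↔ False := by
  simp [falseF]

def bigOr {c m : ℕ} : List (Fml c (m + 1)) → Fml c (m + 1)
  | [] => falseF
  | φ :: L => .or φ (bigOr L)

lemma Sat_bigOr {c m : ℕ} (A : CGraph c) (L : List (Fml c (m + 1))) (v : Fin (m+1) → A.V) :
    Fml.Sat A (bigOr L) v ↔ ∃ φ ∈ L, Fml.Sat A φ v := by
  induction L with
  | nil => simp [bigOr]
  | cons φ L ih => simp [bigOr, ih]

def bigXor {c m : ℕ} : List (Fml c (m + 1)) → Fml c (m + 1)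
  | [] => falseF
  | φ :: L => xorF φ (bigXor L)

/-- Semantics of the parity formula over a list of colors. -/
lemma Sat_bigXor_colors {c m : ℕ} (A : CGraph c) (L : List (Fin c))
    (x y : Fin (m + 2)) (v : Fin (m + 2) → A.V) :
    Fml.Sat A (bigXor (L.map (fun t => andF (.col t x) (.col t y)))) v ↔
      POdd (L.map A.color) (v x) (v y) := by
  induction L with
  | nil => simp [bigXor, POdd]
  | cons t L ih =>
    simp only [List.map_cons, bigXor, Sat_xorF, Sat_andF, Sat_col, POdd, ih]

/-! ### Auxiliary: invariance of satisfaction under automorphisms -/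

lemma Sat_equiv {c : ℕ} (A : CGraph c) (e : A.V ≃ A.V)
    (hadj : ∀ z w : A.V, A.G.Adj (e z) (e w) ↔ A.G.Adj z w)
    (hcol : ∀ (i : Fin c) (z : A.V), e z ∈ A.color i ↔ z ∈ A.color i) :
    ∀ {m : ℕ} (φ : Fml c m) (v : Fin m → A.V), Fml.Sat A φ (e ∘ v) ↔ Fml.Sat A φ v := by
  intro m φ
  induction φ with
  | eq i j => intro v; simp only [Sat_eq, Function.comp_apply, EmbeddingLike.apply_eq_iff_eq]
  | adj i j => intro v; exact hadj _ _
  | col i x => intro v; exact hcol _ _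
  | not φ ih => intro v; simp only [Sat_not, ih]
  | or φ ψ ih1 ih2 => intro v; simp only [Sat_or, ih1, ih2]
  | ex φ ih =>
    intro v
    simp only [Sat_ex]
    constructor
    · rintro ⟨w, hw⟩
      refine ⟨e.symm w, ?_⟩
      rw [← ih (Fin.snoc v (e.symm w))]
      rwa [Fin.comp_snoc, Equiv.apply_symm_apply] 
    · rintro ⟨w, hw⟩
      refine ⟨e w, ?_⟩
      rw [← Fin.comp_snoc]
      exact (ih (Fin.snoc v w)).mpr hw
/-! ### Auxiliary: realizing a symmetric relation by parities of marks -/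

section Parity

variable {m : ℕ}

/-- The marks (at most four nonempty) complementing the pair of classes `ab`. -/
def quadM (eb : Fin m → Fin m → Bool) (ab : Fin m × Fin m) : List (Set (Fin m)) :=
  if ab.1 < ab.2 ∧ eb ab.1 ab.2 = true then [{ab.1, ab.2}, {ab.1}, {ab.2}, (∅ : Set (Fin m))]
  else if ab.1 = ab.2 ∧ eb ab.1 ab.1 = true then [{ab.1}, ∅, ∅, ∅]
  else [∅, ∅, ∅, ∅]

def masterList (eb : Fin m → Fin m → Bool) : List (Fin m × Fin m) → List (Set (Fin m))
  | [] => []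
  | ab :: L => quadM eb ab ++ masterList eb L

def prOf (s t : Fin m) : Fin m × Fin m := (min s t, max s t)

lemma quadM_length (eb : Fin m → Fin m → Bool) (ab : Fin m × Fin m) :
    (quadM eb ab).length = 4 := by
  unfold quadM; split_ifs <;> rfl

lemma masterList_length (eb : Fin m → Fin m → Bool) (L : List (Fin m × Fin m)) :
    (masterList eb L).length = 4 * L.length := by
  induction L with
  | nil => rfl
  | cons ab L ih =>
    simp [masterList, quadM_length, ih, List.length_cons, Nat.mul_succ, Nat.add_comm]

lemma POdd_quadM_le (eb : Fin m → Fin m → Bool) (hsymm : ∀ a b, eb a b = eb b a)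
    (ab : Fin m × Fin m) (s t : Fin m) (hst : s ≤ t) :
    POdd (quadM eb ab) s t ↔ (ab = prOf s t ∧ eb s t = true) := by
  obtain ⟨a, b⟩ := ab
  have hpr : prOf s t = (s, t) := by
    simp [prOf, min_eq_left hst, max_eq_right hst]
  rw [hpr]
  unfold quadM
  split_ifs with h1 h2
  · obtain ⟨hab, heb⟩ := h1
    by_cases hseqt : s = t
    · subst hseqt
      have : (a, b) ≠ (s, s) := by
        simp only [Ne, Prod.mk.injEq, not_and]
        intro ha hb; exact absurd (hb ▸ ha : a = b) hab.ne
      simp only [POdd, Set.mem_insert_iff, Set.mem_singleton_iff, Set.mem_empty_iff_false,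
        Xor', this, false_and, iff_false]
      by_cases hsa : s = a <;> by_cases hsb : s = b <;> simp_all <;> tauto
    · have hslt : s < t := lt_of_le_of_ne hst hseqt
      simp only [POdd, Set.mem_insert_iff, Set.mem_singleton_iff, Set.mem_empty_iff_false,
        Xor', Prod.mk.injEq]
      by_cases hsa : s = a <;> by_cases hsb : s = b <;> by_cases hta : t = a <;>
        by_cases htb : t = b <;> simp_all <;>
        first
          | (exfalso; exact absurd rfl hseqt)
          | (exfalso; exact absurd (hslt.trans hab) (lt_irrefl _))
          | tauto
  · obtain ⟨hab', heb'⟩ := h2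
    replace hab' : a = b := hab'
    replace heb' : eb a a = true := heb'
    subst hab'
    simp only [POdd, Set.mem_singleton_iff, Set.mem_empty_iff_false, Xor', Prod.mk.injEq]
    by_cases hsa : s = a <;> by_cases hta : t = a <;> simp_all <;> tauto
  · simp only [POdd, Set.mem_empty_iff_false, Xor', Prod.mk.injEq]
    constructor
    · tauto
    · rintro ⟨⟨hsa, hta⟩, heb⟩
      subst hsa; subst hta
      rcases lt_or_eq_of_le hst with h | h
      · exact absurd ⟨h, heb⟩ h1
      · subst h; exact absurd ⟨rfl, heb⟩ h2

lemma POdd_quadM (eb : Fin m → Fin m → Bool) (hsymm : ∀ a b, eb a b = eb b a)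
    (ab : Fin m × Fin m) (s t : Fin m) :
    POdd (quadM eb ab) s t ↔ (ab = prOf s t ∧ eb s t = true) := by
  rcases le_total s t with h | h
  · exact POdd_quadM_le eb hsymm ab s t h
  · rw [POdd_symm]
    rw [POdd_quadM_le eb hsymm ab t s h]
    have h1 : prOf t s = prOf s t := by simp [prOf, min_comm, max_comm]
    rw [h1, hsymm t s]

lemma POdd_masterList (eb : Fin m → Fin m → Bool) (hsymm : ∀ a b, eb a b = eb b a)
    (L : List (Fin m × Fin m)) (hnd : L.Nodup) (s t : Fin m) :
    POdd (masterList eb L) s t ↔ (prOf s t ∈ L ∧ eb s t = true) := by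
  induction L with
  | nil => simp [masterList, POdd]
  | cons ab L ih =>
    obtain ⟨hab, hnd'⟩ := List.nodup_cons.mp hnd
    rw [show masterList eb (ab :: L) = quadM eb ab ++ masterList eb L from rfl,
      POdd_append, POdd_quadM eb hsymm, ih hnd']
    simp only [List.mem_cons, Xor']
    constructor
    · rintro (⟨⟨h1, h2⟩, -⟩ | ⟨⟨h1, h2⟩, -⟩)
      · exact ⟨Or.inl h1.symm, h2⟩
      · exact ⟨Or.inr h1, h2⟩
    · rintro ⟨h1 | h1, h2⟩
      · subst h1
        exact Or.inl ⟨⟨rfl, h2⟩, fun h => hab h.1⟩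
      · refine Or.inr ⟨⟨h1, h2⟩, fun h => hab (h.1 ▸ h1)⟩

def allPairs (m : ℕ) : List (Fin m × Fin m) :=
  (List.finRange (m * m)).map (finProdFinEquiv (m := m) (n := m)).symm

lemma allPairs_nodup (m : ℕ) : (allPairs m).Nodup :=
  (List.nodup_finRange _).map (Equiv.injective _)

lemma mem_allPairs (m : ℕ) (pr : Fin m × Fin m) : pr ∈ allPairs m := by
  rw [allPairs, List.mem_map]
  exact ⟨finProdFinEquiv pr, List.mem_finRange _, Equiv.symm_apply_apply _ _⟩

lemma allPairs_length (m : ℕ) : (allPairs m).length = m * m := by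
  simp [allPairs]

lemma ofFn_get_cast {α : Type} {p : ℕ} (L : List α) (h : L.length = p) :
    List.ofFn (fun i : Fin p => L.get (Fin.cast h.symm i)) = L := by
  subst h
  exact List.ofFn_get L

lemma parity_realize (m : ℕ) (eb : Fin m → Fin m → Bool) (hsymm : ∀ a b, eb a b = eb b a) :
    ∃ Z : Fin (4 * (m * m)) → Set (Fin m),
      ∀ s t, POdd (List.ofFn Z) s t ↔ eb s t = true := by
  have hlen : (masterList eb (allPairs m)).length = 4 * (m * m) := by
    rw [masterList_length, allPairs_length]
  refine ⟨fun i => (masterList eb (allPairs m)).get (Fin.cast hlen.symm i), ?_⟩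
  rw [ofFn_get_cast _ hlen]
  intro s t
  rw [POdd_masterList eb hsymm _ (allPairs_nodup m)]
  simp [mem_allPairs]

end Parity
/-! ### Auxiliary: the transduction encoding perturbations of bounded-component classes -/

section Bwd

/-- Index type for the colors used in the encoding. -/
abbrev KIdx (n p : ℕ) : Type := (Fin n ⊕ (Fin n × Fin n)) ⊕ (Unit ⊕ Fin p)

def cB (n p : ℕ) : ℕ := Fintype.card (KIdx n p)

noncomputable def eKB (n p : ℕ) : KIdx n p ≃ Fin (cB n p) := Fintype.equivFin _

noncomputable def idxP (n p : ℕ) (i : Fin n) : Fin (cB n p) := eKB n p (.inl (.inl i))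
noncomputable def idxE (n p : ℕ) (ij : Fin n × Fin n) : Fin (cB n p) := eKB n p (.inl (.inr ij))
noncomputable def idxU (n p : ℕ) : Fin (cB n p) := eKB n p (.inr (.inl ()))
noncomputable def idxM (n p : ℕ) (t : Fin p) : Fin (cB n p) := eKB n p (.inr (.inr t))

noncomputable def nuF (n p : ℕ) : Fml (cB n p) 1 := .col (idxU n p) 0

noncomputable def deltaF (n p : ℕ) (ij : Fin n × Fin n) : Fml (cB n p) 2 :=
  andF (.or (andF (.col (idxP n p ij.1) 0) (.col (idxP n p ij.2) 1))
            (andF (.col (idxP n p ij.2) 0) (.col (idxP n p ij.1) 1)))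
       (andF (.col (idxE n p ij) 0) (.col (idxE n p ij) 1))

noncomputable def baseF (n p : ℕ) : Fml (cB n p) 2 :=
  andF (.or (.eq 0 1) (.adj 0 1)) (bigOr ((allPairs n).map (deltaF n p)))

noncomputable def parF (n p : ℕ) : Fml (cB n p) 2 :=
  bigXor (((List.finRange p).map (idxM n p)).map (fun t => andF (.col t 0) (.col t 1)))

noncomputable def etaF (n p : ℕ) : Fml (cB n p) 2 := andF (.not (.eq 0 1)) (xorF (baseF n p) (parF n p))

/-- The semantic content of a disjunct. -/
def DP (n p : ℕ) (A : CGraph (cB n p)) (ij : Fin n × Fin n) (x y : A.V) : Prop :=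
  ((x ∈ A.color (idxP n p ij.1) ∧ y ∈ A.color (idxP n p ij.2)) ∨
   (x ∈ A.color (idxP n p ij.2) ∧ y ∈ A.color (idxP n p ij.1))) ∧
  x ∈ A.color (idxE n p ij) ∧ y ∈ A.color (idxE n p ij)

lemma Sat_baseF (n p : ℕ) (A : CGraph (cB n p)) (x y : A.V) :
    Fml.Sat A (baseF n p) ![x, y] ↔
      (x = y ∨ A.G.Adj x y) ∧ ∃ ij ∈ allPairs n, DP n p A ij x y := by
  rw [baseF, Sat_andF, Sat_bigOr]
  simp only [Sat_or, Sat_eq, Sat_adj, Matrix.cons_val_zero, Matrix.cons_val_one,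
    Matrix.head_cons]
  constructor
  · rintro ⟨hsc, φ, hφm, hφ⟩
    rw [List.mem_map] at hφm
    obtain ⟨ij, hij, rfl⟩ := hφm
    refine ⟨hsc, ij, hij, ?_⟩
    simpa [deltaF, DP, Matrix.cons_val_zero, Matrix.cons_val_one, Matrix.head_cons] using hφ
  · rintro ⟨hsc, ij, hij, hdp⟩
    refine ⟨hsc, deltaF n p ij, List.mem_map_of_mem hij, ?_⟩
    simpa [deltaF, DP, Matrix.cons_val_zero, Matrix.cons_val_one, Matrix.head_cons] using hdp

lemma Sat_etaF (n p : ℕ) (A : CGraph (cB n p)) (x y : A.V) :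
    Fml.Sat A (etaF n p) ![x, y] ↔
      x ≠ y ∧ Xor'
        ((x = y ∨ A.G.Adj x y) ∧ ∃ ij ∈ allPairs n, DP n p A ij x y)
        (POdd ((List.finRange p).map (fun t => A.color (idxM n p t))) x y) := by
  have hpar : Fml.Sat A (parF n p) ![x, y] ↔
      POdd ((List.finRange p).map (fun t => A.color (idxM n p t))) x y := by
    rw [parF, Sat_bigXor_colors A _ 0 1 ![x, y]]
    rw [List.map_map]
    simp only [Matrix.cons_val_zero, Matrix.cons_val_one, Matrix.head_cons, Function.comp_def]
  rw [etaF, Sat_andF, Sat_xorF, hpar, Sat_baseF, Sat_not, Sat_eq]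
  simp only [Matrix.cons_val_zero, Matrix.cons_val_one, Matrix.head_cons]

lemma POdd_map_symm {α β : Type} (L : List β) (f : β → Set α) (u v : α) :
    POdd (L.map f) u v ↔ POdd (L.map f) v u := POdd_symm _ _ _

/-- The transduction encoding a perturbation (with `p` marks) of a class with
components of size at most `n`. -/
noncomputable def TB (n p : ℕ) (hn : 0 < n) : Transduction where
  k := n
  kpos := hn
  c := cB n p
  I :=
  { ν := nuF n p
    η := etaF n p
    symm := by
      intro A u v h
      rw [Sat_etaF] at h ⊢
      obtain ⟨hne, hx⟩ := h
      refine ⟨fun hh => hne hh.symm, ?_⟩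
      have h1 : ((u = v ∨ A.G.Adj u v) ∧ ∃ ij ∈ allPairs n, DP n p A ij u v) ↔
          ((v = u ∨ A.G.Adj v u) ∧ ∃ ij ∈ allPairs n, DP n p A ij v u) := by
        unfold DP
        constructor <;> rintro ⟨hsc, ij, hij, hdp⟩ <;>
          exact ⟨by rcases hsc with h | h; exact Or.inl h.symm; exact Or.inr h.symm,
            ij, hij, by tauto⟩
      rw [← h1, ← POdd_symm]
      exact hx
    irrefl := by
      intro A v h
      rw [Sat_etaF] at h
      exact h.1 rfl }

end Bwd
@[simp] lemma Interp.result_adj {c : ℕ} (I : Interp c) (A : CGraph c)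
    (u v : {v : A.V // Fml.Sat A I.ν ![v]}) :
    (I.result A).Adj u v ↔ Fml.Sat A I.η ![u.1, v.1] := Iff.rfl

lemma exists_inj_fin {α : Type} [Finite α] {n : ℕ} (h : Nat.card α ≤ n) :
    ∃ f : α → Fin n, Function.Injective f := by
  cases nonempty_fintype α
  rw [Nat.card_eq_fintype_card] at h
  exact ⟨fun a => Fin.castLE h (Fintype.equivFin α a),
    fun a b hab => (Fintype.equivFin α).injective (Fin.castLE_injective h hab)⟩

lemma main_bwd (n p : ℕ) (hn : 0 < n) :
    ∃ T : Transduction, T.k = n ∧ ∀ H G₀ : FGraph,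
      (∀ v : G₀.V, Nat.card {u : G₀.V // G₀.G.Reachable v u} ≤ n) →
      PerturbMem p G₀ H → ∃ G ∈ EdgelessClass, T.mem G H := by
  classical
  refine ⟨TB n p hn, rfl, ?_⟩
  rintro H G₀ hcomp ⟨Z, ⟨e⟩⟩
  let s : Setoid G₀.V :=
    ⟨G₀.G.Reachable, ⟨fun _ => .refl _, SimpleGraph.Reachable.symm, SimpleGraph.Reachable.trans⟩⟩
  have hcard : ∀ q : Quotient s,
      ∃ g : {u : G₀.V // Quotient.mk s u = q} → Fin n, Function.Injective g := by
    intro q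
    obtain ⟨w, rfl⟩ := Quotient.exists_rep q
    have hequiv : {u : G₀.V // Quotient.mk s u = Quotient.mk s w} ≃
        {u : G₀.V // G₀.G.Reachable w u} :=
      Equiv.subtypeEquivRight (fun u => by
        rw [Quotient.eq]
        exact ⟨fun h => h.symm, fun h => h.symm⟩)
    apply exists_inj_fin
    calc Nat.card {u : G₀.V // Quotient.mk s u = Quotient.mk s w}
        = Nat.card {u : G₀.V // G₀.G.Reachable w u} := Nat.card_congr hequiv
      _ ≤ n := hcomp w
  choose g hg using hcard
  let f : G₀.V → Fin n := fun u => g (Quotient.mk s u) ⟨u, rfl⟩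
  let ι : G₀.V → Quotient s × Fin n := fun u => (Quotient.mk s u, f u)
  have key : ∀ (q : Quotient s) (u : G₀.V) (hu : Quotient.mk s u = q), f u = g q ⟨u, hu⟩ := by
    intro q u hu; subst hu; rfl
  have hιinj : Function.Injective ι := by
    intro u v huv
    have h1 : Quotient.mk s u = Quotient.mk s v := congrArg Prod.fst huv
    have h2 : f u = f v := congrArg Prod.snd huv
    rw [key (Quotient.mk s u) u rfl, key (Quotient.mk s u) v h1.symm] at h2
    simpa using hg (Quotient.mk s u) h2
  haveI : Finite (Quotient s) := Quotient.finite s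
  refine ⟨{ V := Quotient s, G := ⊥ }, fun u v h => by simpa using h, ?_⟩
  let colorK : KIdx n p → Set (Quotient s × Fin n) := fun k =>
    match k with
    | .inl (.inl i) => {z | z.2 = i}
    | .inl (.inr ij) => {z | ∃ a b, G₀.G.Adj a b ∧ ι a = (z.1, ij.1) ∧ ι b = (z.1, ij.2)}
    | .inr (.inl _) => Set.range ι
    | .inr (.inr t) => ι '' Z t
  refine ⟨fun i => colorK ((eKB n p).symm i), ?_⟩
  set A := (TB n p hn).copyCGraph { V := Quotient s, G := ⊥ }
    (fun i => colorK ((eKB n p).symm i)) with hA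
  have hcolP : ∀ (i : Fin n) (z : Quotient s × Fin n), z ∈ A.color (idxP n p i) ↔ z.2 = i := by
    intro i z
    show z ∈ colorK ((eKB n p).symm ((eKB n p) (.inl (.inl i)))) ↔ _
    rw [Equiv.symm_apply_apply]
    exact Iff.rfl
  have hcolE : ∀ (ij : Fin n × Fin n) (z : Quotient s × Fin n),
      z ∈ A.color (idxE n p ij) ↔
        ∃ a b, G₀.G.Adj a b ∧ ι a = (z.1, ij.1) ∧ ι b = (z.1, ij.2) := by
    intro ij z
    show z ∈ colorK ((eKB n p).symm ((eKB n p) (.inl (.inr ij)))) ↔ _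
    rw [Equiv.symm_apply_apply]
    exact Iff.rfl
  have hcolM : ∀ (t : Fin p), A.color (idxM n p t) = ι '' Z t := by
    intro t
    show colorK ((eKB n p).symm ((eKB n p) (.inr (.inr t)))) = _
    rw [Equiv.symm_apply_apply]
  have hν : ∀ z : Quotient s × Fin n, Fml.Sat A (nuF n p) ![z] ↔ z ∈ Set.range ι := by
    intro z
    show (![z] 0) ∈ A.color (idxU n p) ↔ _
    show (![z] 0) ∈ colorK ((eKB n p).symm ((eKB n p) (.inr (.inl ())))) ↔ _
    rw [Equiv.symm_apply_apply]
    exact Iff.rfl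
  have hAadj : ∀ z w : Quotient s × Fin n, A.G.Adj z w ↔ (z.1 = w.1 ∧ z.2 ≠ w.2) := by
    intro z w
    show (copyGraph (⊥ : SimpleGraph (Quotient s)) n).Adj z w ↔ _
    rw [copyGraph_adj]
    simp
  have hscl : ∀ u' v' : G₀.V,
      (ι u' = ι v' ∨ A.G.Adj (ι u') (ι v')) ↔ Quotient.mk s u' = Quotient.mk s v' := by
    intro u' v'
    rw [hAadj]
    constructor
    · rintro (h | ⟨h, -⟩)
      · exact congrArg Prod.fst h
      · exact h
    · intro hq
      by_cases hf : f u' = f v'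
      · exact Or.inl (Prod.ext hq hf)
      · exact Or.inr ⟨hq, hf⟩
  -- the vertex equivalence
  refine ⟨RelIso.mk (e.toEquiv.trans ((Equiv.ofInjective ι hιinj).trans
    (Equiv.subtypeEquivRight (fun z => (hν z).symm)))) ?_⟩
  intro a b
  set u := e a with hu
  set v := e b with hv
  show Fml.Sat A (etaF n p) ![ι u, ι v] ↔ H.G.Adj a b
  refine (Sat_etaF n p A (ι u) (ι v)).trans ?_
  have hmk : ∀ (w : G₀.V) (q : Quotient s) (i : Fin n),
      Quotient.mk s w = q → f w = i → ι w = (q, i) := by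
    intro w q i h1 h2
    rw [← h1, ← h2]
  have hbase : ((ι u = ι v ∨ A.G.Adj (ι u) (ι v)) ∧ ∃ ij ∈ allPairs n, DP n p A ij (ι u) (ι v))
      ↔ G₀.G.Adj u v := by
    constructor
    · rintro ⟨hsc, ij, -, ⟨hor, hEu, -⟩⟩
      have hq : Quotient.mk s u = Quotient.mk s v := (hscl u v).mp hsc
      obtain ⟨a', b', hab, ha, hb⟩ := (hcolE ij (ι u)).mp hEu
      rcases hor with ⟨hPu, hPv⟩ | ⟨hPu, hPv⟩
      · have hfu : f u = ij.1 := (hcolP ij.1 (ι u)).mp hPu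
        have hfv : f v = ij.2 := (hcolP ij.2 (ι v)).mp hPv
        have ha' : a' = u := hιinj (ha.trans (hmk u (ι u).1 ij.1 rfl hfu).symm)
        have hb' : b' = v := hιinj (hb.trans (hmk v (ι u).1 ij.2 hq.symm hfv).symm)
        rw [ha', hb'] at hab; exact hab
      · have hfu : f u = ij.2 := (hcolP ij.2 (ι u)).mp hPu
        have hfv : f v = ij.1 := (hcolP ij.1 (ι v)).mp hPv
        have ha' : a' = v := hιinj (ha.trans (hmk v (ι u).1 ij.1 hq.symm hfv).symm)
        have hb' : b' = u := hιinj (hb.trans (hmk u (ι u).1 ij.2 rfl hfu).symm)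
        rw [ha', hb'] at hab; exact hab.symm
    · intro hadj
      have hq : Quotient.mk s u = Quotient.mk s v := Quotient.sound hadj.reachable
      refine ⟨(hscl u v).mpr hq, (f u, f v), mem_allPairs n _, ?_, ?_, ?_⟩
      · exact Or.inl ⟨(hcolP _ _).mpr rfl, (hcolP _ _).mpr rfl⟩
      · exact (hcolE _ _).mpr ⟨u, v, hadj, hmk u (ι u).1 (f u) rfl rfl,
          hmk v (ι u).1 (f v) hq.symm rfl⟩
      · exact (hcolE _ _).mpr ⟨u, v, hadj, hmk u (ι v).1 (f u) hq rfl,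
          hmk v (ι v).1 (f v) rfl rfl⟩
  have hpar2 : POdd ((List.finRange p).map (fun t => A.color (idxM n p t))) (ι u) (ι v) ↔
      POdd (List.ofFn Z) u v := by
    have h1 : (List.finRange p).map (fun t => A.color (idxM n p t)) =
        List.ofFn (fun t => (ι '' Z t : Set (Quotient s × Fin n))) := by
      rw [List.ofFn_eq_map]
      exact List.map_congr_left (fun t _ => hcolM t)
    rw [h1]
    exact POdd_ofFn_iff _ _ _ _ _ _ (fun i => by
      exact and_congr hιinj.mem_set_image hιinj.mem_set_image)
  exact (and_congr hιinj.ne_iff (or_congr (and_congr hbase (not_congr hpar2))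
    (and_congr hpar2 (not_congr hbase)))).trans
    ((perturbGraph_adj (List.ofFn Z) G₀.G u v).symm.trans e.map_rel_iff)
/-! ### Auxiliary: forward direction -/

lemma edgeless_reachable_eq {G : FGraph} (hG : G ∈ EdgelessClass) {u v : G.V}
    (h : G.G.Reachable u v) : u = v := by
  obtain ⟨w⟩ := h
  cases w with
  | nil => rfl
  | cons h _ => exact absurd h (hG _ _)

set_option maxHeartbeats 1000000 in
lemma main_fwd (T : Transduction) :
    ∃ p : ℕ, ∀ H G : FGraph, G ∈ EdgelessClass → T.mem G H →
      ∃ G₀ : FGraph, (∀ v : G₀.V, Nat.card {u : G₀.V // G₀.G.Reachable v u} ≤ T.k) ∧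
        (T.k = 1 → G₀ ∈ EdgelessClass) ∧ PerturbMem p G₀ H := by
  classical
  set m := Fintype.card ((Fin T.k → Fin T.c → Bool) × Fin T.k) with hm
  refine ⟨4 * (m * m), ?_⟩
  rintro H G hG ⟨color, ⟨e⟩⟩
  set A := T.copyCGraph G color with hA
  let tyG : G.V → (Fin T.k → Fin T.c → Bool) := fun g j col => decide ((g, j) ∈ color col)
  let ty : G.V × Fin T.k → (Fin T.k → Fin T.c → Bool) × Fin T.k := fun z => (tyG z.1, z.2)
  let eT : ((Fin T.k → Fin T.c → Bool) × Fin T.k) ≃ Fin m := Fintype.equivFin _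
  have hAadj : ∀ z w : G.V × Fin T.k, A.G.Adj z w ↔ (z.1 = w.1 ∧ z.2 ≠ w.2) := by
    intro z w
    show (copyGraph G.G T.k).Adj z w ↔ _
    rw [copyGraph_adj]
    constructor
    · rintro (h | ⟨h, -⟩)
      · exact h
      · exact absurd h (hG _ _)
    · exact Or.inl
  have hAcol : ∀ (i : Fin T.c) (z : G.V × Fin T.k), z ∈ A.color i ↔ z ∈ color i :=
    fun i z => Iff.rfl
  have swap_pres : ∀ (a b : G.V), tyG a = tyG b →
      ∀ g, tyG (Equiv.swap a b g) = tyG g := by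
    intro a b hab g
    rcases eq_or_ne g a with rfl | hga
    · rw [Equiv.swap_apply_left]; exact hab.symm
    rcases eq_or_ne g b with rfl | hgb
    · rw [Equiv.swap_apply_right]; exact hab
    · rw [Equiv.swap_apply_of_ne_of_ne hga hgb]
  -- transfer along automorphisms
  have htransfer : ∀ x y x' y' : G.V × Fin T.k, x.1 ≠ y.1 → x'.1 ≠ y'.1 →
      ty x = ty x' → ty y = ty y' →
      (Fml.Sat A T.I.η ![x, y] ↔ Fml.Sat A T.I.η ![x', y']) := by
    intro x y x' y' hxy hxy' htx hty
    have htx1 : tyG x.1 = tyG x'.1 := (Prod.ext_iff.mp htx).1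
    have htx2 : x.2 = x'.2 := (Prod.ext_iff.mp htx).2
    have hty1 : tyG y.1 = tyG y'.1 := (Prod.ext_iff.mp hty).1
    have hty2 : y.2 = y'.2 := (Prod.ext_iff.mp hty).2
    set s1 := Equiv.swap x.1 x'.1 with hs1def
    have hs1 : ∀ g, tyG (s1 g) = tyG g := swap_pres _ _ htx1
    set w := s1 y.1 with hwdef
    have htw : tyG w = tyG y'.1 := (hs1 y.1).trans hty1
    set s2 := Equiv.swap w y'.1 with hs2def
    have hs2 : ∀ g, tyG (s2 g) = tyG g := swap_pres _ _ htw
    set σ := s1.trans s2 with hσdef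
    have hσty : ∀ g, tyG (σ g) = tyG g := fun g => (hs2 (s1 g)).trans (hs1 g)
    have hσx : σ x.1 = x'.1 := by
      show s2 (s1 x.1) = x'.1
      rw [hs1def, Equiv.swap_apply_left]
      apply Equiv.swap_apply_of_ne_of_ne
      · intro hcon
        apply hxy
        have h1 : s1 x'.1 = s1 w := congrArg s1 hcon
        rw [hwdef, Equiv.swap_apply_self] at h1
        rw [hs1def, Equiv.swap_apply_right] at h1
        exact h1
      · exact hxy'
    have hσy : σ y.1 = y'.1 := by
      show s2 (s1 y.1) = y'.1
      rw [← hwdef, hs2def, Equiv.swap_apply_left]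
    let eσ : A.V ≃ A.V := Equiv.prodCongr σ (Equiv.refl (Fin T.k))
    have hadjσ : ∀ z w : G.V × Fin T.k, A.G.Adj (eσ z) (eσ w) ↔ A.G.Adj z w := by
      intro z w
      refine (hAadj (eσ z) (eσ w)).trans (Iff.trans ?_ (hAadj z w).symm)
      show (σ z.1 = σ w.1 ∧ z.2 ≠ w.2) ↔ (z.1 = w.1 ∧ z.2 ≠ w.2)
      constructor
      · rintro ⟨hh1, hh2⟩; exact ⟨σ.injective hh1, hh2⟩
      · rintro ⟨hh1, hh2⟩; exact ⟨congrArg σ hh1, hh2⟩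
    have hcolσ : ∀ (i : Fin T.c) (z : G.V × Fin T.k), eσ z ∈ A.color i ↔ z ∈ A.color i := by
      intro i z
      refine (hAcol i (eσ z)).trans (Iff.trans ?_ (hAcol i z).symm)
      have h1 : tyG (σ z.1) = tyG z.1 := hσty z.1
      have h2 := congrFun (congrFun h1 z.2) i
      exact decide_eq_decide.mp h2
    have hsat := Sat_equiv A eσ hadjσ hcolσ T.I.η ![x, y]
    have hcomp : ⇑eσ ∘ (![x, y] : Fin 2 → A.V) = ![x', y'] := by
      funext i
      match i with
      | 0 =>
        show eσ x = x'
        have : eσ x = (σ x.1, x.2) := rfl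
        rw [this, hσx, htx2]
      | 1 =>
        show eσ y = y'
        have : eσ y = (σ y.1, y.2) := rfl
        rw [this, hσy, hty2]
    rw [hcomp] at hsat
    exact hsat.symm
  -- the type-pair relation
  let ε : Fin m → Fin m → Prop := fun a b => ∃ x y : G.V × Fin T.k,
      eT (ty x) = a ∧ eT (ty y) = b ∧ x.1 ≠ y.1 ∧ Fml.Sat A T.I.η ![x, y]
  have hεsymm : ∀ a b, ε a b → ε b a := by
    rintro a b ⟨x, y, hx, hy, hne, hsat⟩
    exact ⟨y, x, hy, hx, hne.symm, T.I.symm A _ _ hsat⟩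
  obtain ⟨ZT, hZT⟩ := parity_realize m (fun a b => decide (ε a b))
    (fun a b => decide_eq_decide.mpr ⟨hεsymm a b, hεsymm b a⟩)
  have hcross : ∀ x y : G.V × Fin T.k, x.1 ≠ y.1 →
      (Fml.Sat A T.I.η ![x, y] ↔ ε (eT (ty x)) (eT (ty y))) := by
    intro x y hne
    constructor
    · intro hs; exact ⟨x, y, rfl, rfl, hne, hs⟩
    · rintro ⟨x', y', hx', hy', hne', hsat⟩
      exact (htransfer x y x' y' hne hne'
        (eT.injective hx').symm (eT.injective hy').symm).mpr hsat
  -- the perturbed graph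
  let R := T.I.result A
  let W : Fin (4 * (m * m)) → Set {v : A.V // Fml.Sat A T.I.ν ![v]} :=
    fun i => {x | eT (ty x.1) ∈ ZT i}
  let G0 : SimpleGraph {v : A.V // Fml.Sat A T.I.ν ![v]} := perturbGraph (List.ofFn W) R
  have hPoddW : ∀ x y : {v : A.V // Fml.Sat A T.I.ν ![v]},
      POdd (List.ofFn W) x y ↔ POdd (List.ofFn ZT) (eT (ty x.1)) (eT (ty y.1)) :=
    fun x y => POdd_ofFn_iff W ZT x y _ _ (fun i => Iff.rfl)
  have hG0cross : ∀ x y, G0.Adj x y → x.1.1 = y.1.1 := by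
    intro x y hxy
    by_contra hne
    rw [perturbGraph_adj] at hxy
    obtain ⟨hne', hxor⟩ := hxy
    have h1 : R.Adj x y ↔ ε (eT (ty x.1)) (eT (ty y.1)) := hcross x.1 y.1 hne
    have h2 : POdd (List.ofFn W) x y ↔ ε (eT (ty x.1)) (eT (ty y.1)) := by
      rw [hPoddW, hZT]
      exact decide_eq_true_iff
    rw [h1, h2] at hxor
    rcases hxor with ⟨hp, hnp⟩ | ⟨hp, hnp⟩ <;> exact hnp hp
  refine ⟨{ V := {v : A.V // Fml.Sat A T.I.ν ![v]}, G := G0 }, ?_, ?_, ?_⟩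
  · -- bounded components
    intro v
    have hwalk : ∀ (a b : {v : A.V // Fml.Sat A T.I.ν ![v]}) (w : G0.Walk a b),
        a.1.1 = b.1.1 := by
      intro a b w
      induction w with
      | nil => rfl
      | cons h _ ih => exact (hG0cross _ _ h).trans ih
    have hinj : Function.Injective
        (fun u : {u : {v : A.V // Fml.Sat A T.I.ν ![v]} // G0.Reachable v u} => u.1.1.2) := by
      intro a b hab
      obtain ⟨wa⟩ := a.2
      obtain ⟨wb⟩ := b.2
      have h1 : a.1.1.1 = b.1.1.1 := (hwalk _ _ wa).symm.trans (hwalk _ _ wb)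
      have h2 : a.1.1 = b.1.1 := Prod.ext h1 hab
      exact Subtype.ext (Subtype.ext h2)
    calc Nat.card {u // G0.Reachable v u} ≤ Nat.card (Fin T.k) :=
          Nat.card_le_card_of_injective _ hinj
      _ = T.k := by simp
  · -- edgeless when k = 1
    intro hk1 u v huv
    haveI : Subsingleton (Fin T.k) := by rw [hk1]; infer_instance
    have h1 : u.1.1 = v.1.1 := hG0cross u v huv
    have h2 : u = v := Subtype.ext (Prod.ext h1 (Subsingleton.elim _ _))
    rw [h2] at huv
    exact G0.loopless.irrefl _ huv
  · -- the perturbation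
    refine ⟨W, ⟨?_⟩⟩
    have hinv : perturbGraph (List.ofFn W) G0 = R := perturbGraph_involutive _ _
    show H.G ≃g perturbGraph (List.ofFn W) G0
    rw [hinv]
    exact e
/-! ### The statement -/

theorem transductions_of_edgeless_graphs (C : Set FGraph) (hC : IsoClosed C) :
    (SqFO C EdgelessClass ↔
      ∃ D : Set FGraph, IsoClosed D ∧ BddComponents D ∧ IsPerturbationOfClass C D) ∧
    (SqFOnc C EdgelessClass ↔ IsPerturbationOfClass C EdgelessClass) := by
  constructor
  · constructor
    · rintro ⟨T, hT⟩
      obtain ⟨p, hp⟩ := main_fwd T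
      refine ⟨{G : FGraph | ∀ v : G.V, Nat.card {u : G.V // G.G.Reachable v u} ≤ T.k},
        ?_, ⟨T.k, fun G hG v => hG v⟩, p, ?_⟩
      · -- iso-closedness of the bounded-components class
        intro G H hGH hG v
        obtain ⟨e⟩ := hGH
        have hr : ∀ u : H.V, H.G.Reachable v u ↔ G.G.Reachable (e.symm v) (e.symm u) := by
          intro u
          constructor
          · intro h; exact h.map e.symm.toHom
          · intro h
            have h2 := h.map e.toHom
            simpa using h2
        have hcard : Nat.card {u : H.V // H.G.Reachable v u} =
            Nat.card {u : G.V // G.G.Reachable (e.symm v) u} :=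
          Nat.card_congr (Equiv.subtypeEquiv e.symm.toEquiv (fun u => hr u))
        rw [hcard]
        exact hG (e.symm v)
      · intro H hH
        obtain ⟨G, hGE, hmem⟩ := hT hH
        obtain ⟨G₀, h1, h2, h3⟩ := hp H G hGE hmem
        exact ⟨G₀, h1, h3⟩
    · rintro ⟨D, hDiso, ⟨n, hn⟩, p, hP⟩
      obtain ⟨T, hTk, hT⟩ := main_bwd (max n 1) p (lt_of_lt_of_le Nat.one_pos (le_max_right n 1))
      refine ⟨T, fun H hH => ?_⟩
      obtain ⟨G₀, hG₀D, hpm⟩ := hP hH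
      exact hT H G₀ (fun v => le_trans (hn G₀ hG₀D v) (le_max_left n 1)) hpm
  · constructor
    · rintro ⟨T, hTk, hT⟩
      obtain ⟨p, hp⟩ := main_fwd T
      refine ⟨p, fun H hH => ?_⟩
      obtain ⟨G, hGE, hmem⟩ := hT hH
      obtain ⟨G₀, h1, h2, h3⟩ := hp H G hGE hmem
      exact ⟨G₀, h2 hTk, h3⟩
    · rintro ⟨p, hP⟩
      obtain ⟨T, hTk, hT⟩ := main_bwd 1 p Nat.one_pos
      refine ⟨T, hTk, fun H hH => ?_⟩
      obtain ⟨G₀, hG₀E, hpm⟩ := hP hH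
      refine hT H G₀ (fun v => ?_) hpm
      have hss : Subsingleton {u : G₀.V // G₀.G.Reachable v u} :=
        ⟨fun a b => Subtype.ext
          ((edgeless_reachable_eq hG₀E a.2).symm.trans (edgeless_reachable_eq hG₀E b.2))⟩
      have hinj : Function.Injective
          (fun _ : {u : G₀.V // G₀.G.Reachable v u} => (0 : Fin 1)) :=
        fun a b _ => hss.allEq a b
      calc Nat.card {u : G₀.V // G₀.G.Reachable v u} ≤ Nat.card (Fin 1) :=
            Nat.card_le_card_of_injective _ hinj
        _ = 1 := by simp
end
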